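/- arXiv:2007.15932 — 4 statements merged into one kernel-verified Lean document; each statement's English description precedes it below -/
import Mathlib

section
/- For every rectangular EW-tableau T with m rows and n columns, the pair φ(T) = (R, ℓ) produced by the map φ is a labelled ribbon parallelogram polyomino of type (m,n); that is, φ maps EW_{m,n} into LRib_{m,n}. -/
/- Combinatorial objects from "EW-tableaux and parallelogram polyominoes".
A tableau of type `(m+1, n+1)` (i.e. with `m+1` rows and `n+1` columns) is a
0/1-filling, encoded as a function to `Bool` (`true` = 1).  Rows are indexed
top to bottom, columns left to right, both starting at `0`.  The row labelled
`v i` (for `i < m+1`) and the column labelled `v ((m+1)+j)` (for `j < n+1`)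
are recorded through permutations `rl`, `cl` of `Fin (m+1)`, `Fin (n+1)`. -/

namespace EWPaper

/-- A 0/1 tableau with `m+1` rows and `n+1` columns; `true` encodes the entry 1. -/
abbrev Tab (m n : ℕ) := Fin (m + 1) → Fin (n + 1) → Bool

variable {m n : ℕ}

/-- A rectangular EW-tableau: the top row is all 1s, every other row contains a 0,
and no four cells forming the corners of a rectangle carry 0s in two diagonally
opposite corners and 1s in the other two. -/
def IsEW (T : Tab m n) : Prop :=
  (∀ j, T 0 j = true) ∧
  (∀ i : Fin (m + 1), i ≠ 0 → ∃ j, T i j = false) ∧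
  (∀ (i i' : Fin (m + 1)) (j j' : Fin (n + 1)), i ≠ i' → j ≠ j' →
    T i j = true → T i' j' = true → (T i j' = true ∨ T i' j = true))

/-- The (0-based) column index of the leftmost 1 of row `i`. -/
noncomputable def leftmost (T : Tab m n) (i : Fin (m + 1)) : ℕ :=
  sInf {j : ℕ | ∃ h : j < n + 1, T i ⟨j, h⟩ = true}

/-- The (0-based) column index of the rightmost 1 of row `i`. -/
noncomputable def rightmost (T : Tab m n) (i : Fin (m + 1)) : ℕ :=
  sSup {j : ℕ | ∃ h : j < n + 1, T i ⟨j, h⟩ = true}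

/-- The (0-based) row index of the topmost 1 of column `j`. -/
noncomputable def topmost (T : Tab m n) (j : Fin (n + 1)) : ℕ :=
  sInf {i : ℕ | ∃ h : i < m + 1, T ⟨i, h⟩ j = true}

/-- Parallelogram polyomino (as a 0/1 tableau): 1s in the two corners `(1,1)` and
`(m,n)`; every row has a nonempty contiguous set of 1s; leftmost and rightmost 1s
of the rows move weakly to the right going down. -/
def IsPara (T : Tab m n) : Prop :=
  T 0 0 = true ∧ T (Fin.last m) (Fin.last n) = true ∧
  (∀ i, ∃ j, T i j = true) ∧
  (∀ (i : Fin (m + 1)) (j j' j'' : Fin (n + 1)),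
    j ≤ j' → j' ≤ j'' → T i j = true → T i j'' = true → T i j' = true) ∧
  (∀ i i' : Fin (m + 1), i ≤ i' → leftmost T i ≤ leftmost T i') ∧
  (∀ i i' : Fin (m + 1), i ≤ i' → rightmost T i ≤ rightmost T i')

/-- The number of 1s of a tableau. -/
def ones (T : Tab m n) : ℕ :=
  (Finset.univ.filter fun p : Fin (m + 1) × Fin (n + 1) => T p.1 p.2 = true).card

/-- Ribbon parallelogram polyomino: a parallelogram polyomino of type `(m+1, n+1)`
with the minimal number `(m+1) + (n+1) - 1` of 1s. -/
def IsRib (T : Tab m n) : Prop := IsPara T ∧ ones T = m + n + 1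

/-- A row- and column-labelled tableau: row `i` carries the label `v (rl i)` and
column `j` carries the label `v ((m+1) + cl j)`. -/
structure Labelled (m n : ℕ) where
  T : Tab m n
  rl : Equiv.Perm (Fin (m + 1))
  cl : Equiv.Perm (Fin (n + 1))

/-- Labelled parallelogram polyomino: the underlying tableau is a parallelogram
polyomino, the top row is labelled `v 0`, rows whose leftmost 1s are the same
distance from the left side have labels increasing top to bottom, and columns
whose topmost 1s are at the same height have labels increasing left to right. -/
def IsLPara (D : Labelled m n) : Prop :=
  IsPara D.T ∧ D.rl 0 = 0 ∧
  (∀ i i' : Fin (m + 1), leftmost D.T i = leftmost D.T i' → i < i' → D.rl i < D.rl i') ∧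
  (∀ j j' : Fin (n + 1), topmost D.T j = topmost D.T j' → j < j' → D.cl j < D.cl j')

/-- Labelled ribbon parallelogram polyomino. -/
def IsLRib (D : Labelled m n) : Prop := IsLPara D ∧ ones D.T = m + n + 1

/-- Step 1 of `φ`: the stable sort of the columns by their number of 1s, ascending
(so that in an EW-tableau only 0s lie to the left of every 0), ties (identical
columns) broken by original label, increasing left to right. -/
def sortCols (T : Tab m n) : Equiv.Perm (Fin (n + 1)) :=
  Tuple.sort fun j => (Finset.univ.filter fun i => T i j = true).card

/-- Step 2 of `φ`: the stable sort of the rows by their number of 0s, ascending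
(so that in an EW-tableau only 1s lie above every 1), ties (identical rows)
broken by original label, increasing top to bottom. -/
def sortRows (T : Tab m n) : Equiv.Perm (Fin (m + 1)) :=
  Tuple.sort fun i => (Finset.univ.filter fun j => T i j = false).card

/-- The tableau `T'` of Steps 1–2 of `φ`. -/
def sortedTab (T : Tab m n) : Tab m n := fun i j => T (sortRows T i) (sortCols T j)

/-- Step 4 of `φ`: `R i j = 1` iff (`T' i j = 1` and (`i = m` or `T' (i+1) j = 0`)) or
(`T' i j = 0` and (`j = n` or `T' i (j+1) = 1`)). -/
def step4 (S : Tab m n) : Tab m n := fun i j =>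
  (S i j && decide (∀ i' : Fin (m + 1), (i' : ℕ) = (i : ℕ) + 1 → S i' j = false)) ||
  (!S i j && decide (∀ j' : Fin (n + 1), (j' : ℕ) = (j : ℕ) + 1 → S i j' = true))

/-- The map `φ`: sort rows and columns, apply Step 4, and remember, as the
labelling, where each row and column of the original tableau went. -/
def phi (T : Tab m n) : Labelled m n :=
  ⟨step4 (sortedTab T), sortRows T, sortCols T⟩

/-- The tableau `T'` of the definition of `ψ`:
`T'_{ij} = 1` iff `(i,j) = (1,1)` or there is `k < j` with `R i k = 1`. -/
def psiPre (R : Tab m n) : Tab m n := fun i j =>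
  decide ((i = 0 ∧ j = 0) ∨ ∃ k : Fin (n + 1), k < j ∧ R i k = true)

/-- The map `ψ`: form `psiPre` of the underlying tableau and permute rows and
columns so that row and column labels are increasing (row `i` of the result is
the row of `psiPre D.T` labelled `v i`, and similarly for columns). -/
def psi (D : Labelled m n) : Tab m n := fun i j =>
  psiPre D.T (D.rl.symm i) (D.cl.symm j)

/-- The entry of `T` at `(i, j)` is a cornersupport entry: there is a
non-attacking entry with the opposite value at `(i', j')` such that the
other two corners `(i', j)` and `(i, j')` carry the same value as `(i, j)`. -/
def Cornersupport (T : Tab m n) (i : Fin (m + 1)) (j : Fin (n + 1)) : Prop :=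
  ∃ (i' : Fin (m + 1)) (j' : Fin (n + 1)),
    i' ≠ i ∧ j' ≠ j ∧ T i' j' ≠ T i j ∧ T i' j = T i j ∧ T i j' = T i j

instance (T : Tab m n) (i : Fin (m + 1)) (j : Fin (n + 1)) :
    Decidable (Cornersupport T i j) := by
  unfold Cornersupport; infer_instance

/-- `η` of the row labelled `v i`: the number of non-cornersupport 0s in row `i`. -/
def etaRow (T : Tab m n) (i : Fin (m + 1)) : ℕ :=
  (Finset.univ.filter fun j => T i j = false ∧ ¬ Cornersupport T i j).card

/-- `η` of the column labelled `v ((m+1)+j)`: the number of non-cornersupport 1s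
in column `j`. -/
def etaCol (T : Tab m n) (j : Fin (n + 1)) : ℕ :=
  (Finset.univ.filter fun i => T i j = true ∧ ¬ Cornersupport T i j).card

/-- A marked/decorated rectangular EW-tableau: a tableau together with a
decoration value for each row below the first (recorded as `arow`, with the
normalisation `arow 0 = 0` for the unmarked top row) and each column (`acol`). -/
structure MEW (m n : ℕ) where
  T : Tab m n
  arow : Fin (m + 1) → ℕ
  acol : Fin (n + 1) → ℕ

/-- Membership in `MEW_{m+1,n+1}`: the tableau is an EW-tableau and the
decorations satisfy `0 ≤ a_i ≤ η_i(T) - 1`. -/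
def IsMEW (M : MEW m n) : Prop :=
  IsEW M.T ∧ M.arow 0 = 0 ∧
  (∀ i : Fin (m + 1), i ≠ 0 → M.arow i < etaRow M.T i) ∧
  (∀ j : Fin (n + 1), M.acol j < etaCol M.T j)

/-- The expansion `⟨D, ζ⟩` of a labelled ribbon parallelogram polyomino `D` by a
surplus vector `ζ` (indexed by labels): the row labelled `v i` gets `ζ i` cells
appended to the left of its leftmost 1, the column labelled `v ((m+1)+j)` gets
`ζ' j` cells appended above its topmost 1; the rows and columns are then
reordered so as to satisfy the labelling convention (sorted by the position of
the new leftmost/topmost 1, ties broken by increasing label) and the interior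
is completed with 1s. -/
noncomputable def expand (D : Labelled m n)
    (zrow : Fin (m + 1) → ℕ) (zcol : Fin (n + 1) → ℕ) : Labelled m n :=
  let ell : Fin (m + 1) → ℕ := fun x => leftmost D.T x - zrow (D.rl x)
  let top : Fin (n + 1) → ℕ := fun y => topmost D.T y - zcol (D.cl y)
  let σ : Equiv.Perm (Fin (m + 1)) := Tuple.sort fun x => toLex (ell x, (D.rl x : ℕ))
  let τ : Equiv.Perm (Fin (n + 1)) := Tuple.sort fun y => toLex (top y, (D.cl y : ℕ))
  ⟨fun i j => decide (ell (σ i) ≤ (j : ℕ) ∧ top (τ j) ≤ (i : ℕ)),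
    σ.trans D.rl, τ.trans D.cl⟩

/-- The map `Φ` from marked EW-tableaux to labelled parallelogram polyominoes:
`Φ(T, a) = ⟨φ(T), ζ⟩` where `ζ_i = η_i(T) - a_i - 1`. -/
noncomputable def Phi (M : MEW m n) : Labelled m n :=
  expand (phi M.T) (fun i => etaRow M.T i - M.arow i - 1)
    (fun j => etaCol M.T j - M.acol j - 1)

/-- ℕ-indexed version of `rightmost` (junk value for out-of-range rows). -/
noncomputable def rmaxN (P : Tab m n) (i : ℕ) : ℕ :=
  sSup {j : ℕ | ∃ (hi : i < m + 1) (hj : j < n + 1), P ⟨i, hi⟩ ⟨j, hj⟩ = true}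

/-- The lowest 1 of column `j` (ℕ-indexed, junk value for out-of-range columns). -/
noncomputable def bmaxN (P : Tab m n) (j : ℕ) : ℕ :=
  sSup {i : ℕ | ∃ (hi : i < m + 1) (hj : j < n + 1), P ⟨i, hi⟩ ⟨j, hj⟩ = true}

/-- The rows of the successive horizontal segments of the bounce path of `P`:
start in row 0; having arrived in row `i`, move right to the rightmost 1 of
row `i` and then down to the lowest 1 of that column. -/
noncomputable def bncI (P : Tab m n) : ℕ → ℕ
  | 0 => 0
  | k + 1 => bmaxN P (rmaxN P (bncI P k))

/-- The columns of the successive vertical segments of the bounce path of `P`. -/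
noncomputable def bncJ (P : Tab m n) (k : ℕ) : ℕ := rmaxN P (bncI P k)

/-- The cell `(i, j)` is visited by the bounce path of `P`: it lies on the `k`-th
horizontal segment (row `bncI k`, columns `bncJ (k-1)` to `bncJ k`, starting at
column 0 when `k = 0`) or on the `k`-th vertical segment (column `bncJ k`, rows
`bncI k` to `bncI (k+1)`) for some `k`. -/
def BounceCell (P : Tab m n) (i j : ℕ) : Prop :=
  ∃ k : ℕ,
    (i = bncI P k ∧ (match k with | 0 => 0 | k' + 1 => bncJ P k') ≤ j ∧ j ≤ bncJ P k) ∨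
    (j = bncJ P k ∧ bncI P k ≤ i ∧ i ≤ bncI P (k + 1))

/-- The bounce path of `P`, as the 0/1 tableau whose 1s are exactly the cells
visited by the bounce path. -/
noncomputable def bounceTab (P : Tab m n) : Tab m n := fun i j =>
  @decide (BounceCell P (i : ℕ) (j : ℕ)) (Classical.propDecidable _)

/-- `rl'` is the row labelling of the bounce ribbon of `D` induced by `D`:
within each class of rows of `bounce D.T` having their leftmost 1 in the same
column, the labels increase top to bottom, and each such class carries the same
set of labels as it does under the labelling of `D`. -/
def InducedRows (D : Labelled m n) (rl' : Equiv.Perm (Fin (m + 1))) : Prop :=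
  (∀ i i' : Fin (m + 1), leftmost (bounceTab D.T) i = leftmost (bounceTab D.T) i' →
    i < i' → rl' i < rl' i') ∧
  (∀ c : ℕ,
    (Finset.univ.filter fun i => leftmost (bounceTab D.T) i = c).image rl' =
    (Finset.univ.filter fun i => leftmost (bounceTab D.T) i = c).image D.rl)

/-- `cl'` is the column labelling of the bounce ribbon of `D` induced by `D`. -/
def InducedCols (D : Labelled m n) (cl' : Equiv.Perm (Fin (n + 1))) : Prop :=
  (∀ j j' : Fin (n + 1), topmost (bounceTab D.T) j = topmost (bounceTab D.T) j' →
    j < j' → cl' j < cl' j') ∧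
  (∀ c : ℕ,
    (Finset.univ.filter fun j => topmost (bounceTab D.T) j = c).image cl' =
    (Finset.univ.filter fun j => topmost (bounceTab D.T) j = c).image D.cl)

/-- The surplus of the row label `v i`: the position of the leftmost 1 of the row
of the bounce ribbon labelled `v i` minus the position of the leftmost 1 of the
row of `D` labelled `v i`. -/
noncomputable def surpRow (D : Labelled m n) (rl' : Equiv.Perm (Fin (m + 1)))
    (i : Fin (m + 1)) : ℤ :=
  (leftmost (bounceTab D.T) (rl'.symm i) : ℤ) - (leftmost D.T (D.rl.symm i) : ℤ)

/-- The surplus of the column label `v ((m+1)+j)`. -/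
noncomputable def surpCol (D : Labelled m n) (cl' : Equiv.Perm (Fin (n + 1)))
    (j : Fin (n + 1)) : ℤ :=
  (topmost (bounceTab D.T) (cl'.symm j) : ℤ) - (topmost D.T (D.cl.symm j) : ℤ)



/-! ### Auxiliary lemmas for `phi_mem_LRib` -/

lemma aux_mem_iff_lt_card_of_lower {N : ℕ} {s : Finset (Fin N)}
    (h : ∀ a b : Fin N, a ≤ b → b ∈ s → a ∈ s) (j : Fin N) :
    j ∈ s ↔ (j : ℕ) < s.card := by
  constructor
  · intro hj
    have hsub : Finset.Iic j ⊆ s := fun a ha => h a j (Finset.mem_Iic.mp ha) hj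
    have := Finset.card_le_card hsub
    rw [Fin.card_Iic] at this; omega
  · intro hj
    by_contra hjs
    have hsub : s ⊆ Finset.Iio j := by
      intro b hb
      rcases lt_or_ge b j with h' | h'
      · exact Finset.mem_Iio.mpr h'
      · exact absurd (h j b h' hb) hjs
    have := Finset.card_le_card hsub
    rw [Fin.card_Iio] at this; omega

lemma aux_card_filter_perm {N : ℕ} (τ : Equiv.Perm (Fin N)) (p : Fin N → Prop)
    [DecidablePred p] :
    (Finset.univ.filter fun j => p (τ j)).card = (Finset.univ.filter p).card := by
  apply Finset.card_nbij (i := fun j => τ j)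
  · intro a ha; simp only [Finset.coe_filter, Finset.mem_filter, Finset.mem_univ, true_and, Set.mem_setOf_eq] at ha ⊢; exact ha
  · exact fun a _ b _ hab => τ.injective hab
  · intro x hx
    simp only [Finset.coe_filter, Finset.mem_univ, true_and, Set.mem_setOf_eq] at hx
    exact ⟨τ.symm x, by simpa using hx⟩

/-- number of 1s in column `j` of `T` -/
def ckey (T : Tab m n) (j : Fin (n + 1)) : ℕ := (Finset.univ.filter fun i => T i j = true).card
/-- number of 0s in row `i` of `T` -/
def rkey (T : Tab m n) (i : Fin (m + 1)) : ℕ := (Finset.univ.filter fun j => T i j = false).card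

lemma col_chain {T : Tab m n} (hT : IsEW T) (j j' : Fin (n + 1)) :
    (∀ i, T i j = true → T i j' = true) ∨ (∀ i, T i j' = true → T i j = true) := by
  by_contra hc
  push_neg at hc
  obtain ⟨⟨i, hij, hij'⟩, ⟨i', hi'j', hi'j⟩⟩ := hc
  have hne : i ≠ i' := by rintro rfl; exact hij' hi'j'
  have hjj : j ≠ j' := by rintro rfl; simp_all
  rcases hT.2.2 i i' j j' hne hjj hij hi'j' with h | h <;> simp_all

lemma row_chain {T : Tab m n} (hT : IsEW T) (i i' : Fin (m + 1)) :
    (∀ j, T i j = true → T i' j = true) ∨ (∀ j, T i' j = true → T i j = true) := by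
  by_contra hc
  push_neg at hc
  obtain ⟨⟨j, hij, hij'⟩, ⟨j', hi'j', hi'j⟩⟩ := hc
  have hne : j ≠ j' := by rintro rfl; simp_all
  have hii : i ≠ i' := by rintro rfl; simp_all
  rcases hT.2.2 i i' j j' hii hne hij hi'j' with h | h <;> simp_all

lemma col_subset {T : Tab m n} (hT : IsEW T) {j j' : Fin (n + 1)}
    (h : ckey T j ≤ ckey T j') : ∀ i, T i j = true → T i j' = true := by
  rcases col_chain hT j j' with hc | hc
  · exact hc
  · intro i hi
    have hsub : (Finset.univ.filter fun i => T i j' = true) ⊆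
        (Finset.univ.filter fun i => T i j = true) := by
      intro x hx
      simp only [Finset.mem_filter, Finset.mem_univ, true_and] at hx ⊢
      exact hc x hx
    have := Finset.eq_of_subset_of_card_le hsub h
    have hmem : i ∈ (Finset.univ.filter fun i => T i j = true) := by simp [hi]
    rw [← this] at hmem
    simpa using hmem

lemma rkey_add_ones {T : Tab m n} (r : Fin (m + 1)) :
    rkey T r + (Finset.univ.filter fun j => T r j = true).card = n + 1 := by
  have := Finset.card_filter_add_card_filter_not
    (s := (Finset.univ : Finset (Fin (n+1)))) (p := fun j => T r j = false)
  simp only [Finset.card_univ, Fintype.card_fin, Bool.not_eq_false] at this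
  simpa [rkey] using this

lemma row_subset {T : Tab m n} (hT : IsEW T) {i i' : Fin (m + 1)}
    (h : rkey T i' ≤ rkey T i) : ∀ j, T i j = true → T i' j = true := by
  rcases row_chain hT i i' with hc | hc
  · exact hc
  · intro j hj
    have h1 : (Finset.univ.filter fun j => T i j = true).card ≤
        (Finset.univ.filter fun j => T i' j = true).card := by
      have := rkey_add_ones (T := T) i; have := rkey_add_ones (T := T) i'; omega
    have hsub : (Finset.univ.filter fun j => T i' j = true) ⊆
        (Finset.univ.filter fun j => T i j = true) := by
      intro x hx
      simp only [Finset.mem_filter, Finset.mem_univ, true_and] at hx ⊢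
      exact hc x hx
    have := Finset.eq_of_subset_of_card_le hsub h1
    have hmem : j ∈ (Finset.univ.filter fun j => T i j = true) := by simp [hj]
    rw [← this] at hmem
    simpa using hmem

lemma sortCols_key_mono (T : Tab m n) : Monotone fun j => ckey T (sortCols T j) :=
  Tuple.monotone_sort (fun j => (Finset.univ.filter fun i => T i j = true).card)

lemma sortRows_key_mono (T : Tab m n) : Monotone fun i => rkey T (sortRows T i) :=
  Tuple.monotone_sort (fun i => (Finset.univ.filter fun j => T i j = false).card)

lemma sortCols_stable (T : Tab m n) : ∀ j j' : Fin (n + 1), j < j' →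
    ckey T (sortCols T j) = ckey T (sortCols T j') → sortCols T j < sortCols T j' :=
  (Tuple.eq_sort_iff.mp (rfl : sortCols T = _)).2

lemma sortRows_stable (T : Tab m n) : ∀ i i' : Fin (m + 1), i < i' →
    rkey T (sortRows T i) = rkey T (sortRows T i') → sortRows T i < sortRows T i' :=
  (Tuple.eq_sort_iff.mp (rfl : sortRows T = _)).2

lemma sorted_row_mono {T : Tab m n} (hT : IsEW T) {i : Fin (m + 1)} {j j' : Fin (n + 1)}
    (hjj : j ≤ j') (h : sortedTab T i j = true) : sortedTab T i j' = true :=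
  col_subset hT (sortCols_key_mono T hjj) _ h

lemma sorted_col_mono {T : Tab m n} (hT : IsEW T) {i i' : Fin (m + 1)} {j : Fin (n + 1)}
    (hii : i' ≤ i) (h : sortedTab T i j = true) : sortedTab T i' j = true :=
  row_subset hT (sortRows_key_mono T hii) _ h

/-- number of 0s in row `i` of the sorted tableau. -/
def fS (T : Tab m n) (i : Fin (m + 1)) : ℕ := rkey (sortedTab T) i
/-- number of 1s in column `j` of the sorted tableau. -/
def gS (T : Tab m n) (j : Fin (n + 1)) : ℕ := ckey (sortedTab T) j

lemma fS_eq (T : Tab m n) (i : Fin (m + 1)) : fS T i = rkey T (sortRows T i) :=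
  aux_card_filter_perm (sortCols T) (fun j => T (sortRows T i) j = false)

lemma gS_eq (T : Tab m n) (j : Fin (n + 1)) : gS T j = ckey T (sortCols T j) :=
  aux_card_filter_perm (sortRows T) (fun i => T i (sortCols T j) = true)

lemma fS_mono {T : Tab m n} {i i' : Fin (m + 1)} (h : i ≤ i') : fS T i ≤ fS T i' := by
  rw [fS_eq, fS_eq]; exact sortRows_key_mono T h

lemma gS_mono {T : Tab m n} {j j' : Fin (n + 1)} (h : j ≤ j') : gS T j ≤ gS T j' := by
  rw [gS_eq, gS_eq]; exact sortCols_key_mono T h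

lemma fS_le (T : Tab m n) (i : Fin (m + 1)) : fS T i ≤ n + 1 := by
  have := Finset.card_filter_le (Finset.univ : Finset (Fin (n+1)))
    (fun j => sortedTab T i j = false)
  simpa [fS, rkey] using this

lemma gS_le (T : Tab m n) (j : Fin (n + 1)) : gS T j ≤ m + 1 := by
  have := Finset.card_filter_le (Finset.univ : Finset (Fin (m+1)))
    (fun i => sortedTab T i j = true)
  simpa [gS, ckey] using this

/-- the rows of the sorted tableau are 0s followed by 1s -/
lemma sorted_char {T : Tab m n} (hT : IsEW T) (i : Fin (m + 1)) (j : Fin (n + 1)) :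
    sortedTab T i j = true ↔ fS T i ≤ (j : ℕ) := by
  have hlow : ∀ a b : Fin (n + 1), a ≤ b →
      b ∈ (Finset.univ.filter fun j => sortedTab T i j = false) →
      a ∈ (Finset.univ.filter fun j => sortedTab T i j = false) := by
    intro a b hab hb
    simp only [Finset.mem_filter, Finset.mem_univ, true_and] at hb ⊢
    by_contra ha
    rw [Bool.not_eq_false] at ha
    have := sorted_row_mono hT hab ha
    simp [this] at hb
  have hch : sortedTab T i j = false ↔ (j : ℕ) < fS T i := by
    have := aux_mem_iff_lt_card_of_lower hlow j
    simpa only [fS, rkey, Finset.mem_filter, Finset.mem_univ, true_and] using this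
  constructor
  · intro h
    by_contra hc
    push_neg at hc
    rw [hch.mpr hc] at h
    cases h
  · intro h
    rcases Bool.eq_false_or_eq_true (sortedTab T i j) with hb | hb
    · exact hb
    · exact absurd (hch.mp hb) (by omega)

/-- the columns of the sorted tableau are 1s followed by 0s -/
lemma sorted_char' {T : Tab m n} (hT : IsEW T) (i : Fin (m + 1)) (j : Fin (n + 1)) :
    sortedTab T i j = true ↔ (i : ℕ) < gS T j := by
  have hlow : ∀ a b : Fin (m + 1), a ≤ b →
      b ∈ (Finset.univ.filter fun i => sortedTab T i j = true) →
      a ∈ (Finset.univ.filter fun i => sortedTab T i j = true) := by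
    intro a b hab hb
    simp only [Finset.mem_filter, Finset.mem_univ, true_and] at hb ⊢
    exact sorted_col_mono hT hab hb
  have := aux_mem_iff_lt_card_of_lower hlow i
  simpa only [gS, ckey, Finset.mem_filter, Finset.mem_univ, true_and] using this

lemma rkey_zero {T : Tab m n} (hT : IsEW T) : rkey T 0 = 0 := by
  rw [rkey, Finset.card_eq_zero, Finset.filter_eq_empty_iff]
  intro j _
  simp [hT.1 j]

lemma rkey_pos {T : Tab m n} (hT : IsEW T) {i : Fin (m + 1)} (hi : i ≠ 0) :
    1 ≤ rkey T i := by
  obtain ⟨j, hj⟩ := hT.2.1 i hi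
  rw [rkey]
  refine Finset.card_pos.mpr ⟨j, ?_⟩
  simp [hj]

lemma sortRows_zero {T : Tab m n} (hT : IsEW T) : sortRows T 0 = 0 := by
  by_contra hne
  have h1 : 1 ≤ rkey T (sortRows T 0) := rkey_pos hT hne
  have h2 : rkey T (sortRows T 0) ≤ rkey T (sortRows T ((sortRows T).symm 0)) :=
    sortRows_key_mono T (Fin.zero_le _)
  rw [Equiv.apply_symm_apply] at h2
  rw [rkey_zero hT] at h2
  omega

lemma fS_zero {T : Tab m n} (hT : IsEW T) : fS T 0 = 0 := by
  rw [fS_eq, sortRows_zero hT, rkey_zero hT]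

lemma fS_pos {T : Tab m n} (hT : IsEW T) {i : Fin (m + 1)} (hi : i ≠ 0) : 1 ≤ fS T i := by
  rw [fS_eq]
  refine rkey_pos hT fun hz => hi ?_
  have : sortRows T i = sortRows T 0 := by rw [hz, sortRows_zero hT]
  exact (sortRows T).injective this

lemma gS_pos {T : Tab m n} (hT : IsEW T) (j : Fin (n + 1)) : 1 ≤ gS T j := by
  have h0 : sortedTab T 0 j = true := (sorted_char hT 0 j).mpr (by rw [fS_zero hT]; omega)
  have := (sorted_char' hT 0 j).mp h0
  omega

lemma sorted_char_false {T : Tab m n} (hT : IsEW T) (i : Fin (m + 1)) (j : Fin (n + 1)) :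
    sortedTab T i j = false ↔ ¬ fS T i ≤ (j : ℕ) := by
  rw [← Bool.not_eq_true, sorted_char hT]

/-- upper end of the interval of 1s in row `i` of `step4 (sortedTab T)` -/
def UU (T : Tab m n) (i : Fin (m + 1)) : ℕ :=
  if him : (i : ℕ) < m then fS T ⟨(i : ℕ) + 1, Nat.succ_lt_succ him⟩ - 1 else n

lemma step4_char {T : Tab m n} (hT : IsEW T) (i : Fin (m + 1)) (j : Fin (n + 1)) :
    step4 (sortedTab T) i j = true ↔
      (fS T i - 1 ≤ (j : ℕ) ∧ (j : ℕ) ≤ UU T i) := by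
  have hfi := sorted_char hT i j
  have hile : (i : ℕ) ≤ m := by omega
  have hjle : (j : ℕ) ≤ n := by omega
  have hfileq := fS_le T i
  simp only [step4, Bool.or_eq_true, Bool.and_eq_true, Bool.not_eq_true',
    decide_eq_true_eq]
  have hSfalse := sorted_char_false hT i j
  have hjq : (∀ j' : Fin (n + 1), (j' : ℕ) = (j : ℕ) + 1 → sortedTab T i j' = true) ↔
      ((j : ℕ) = n ∨ fS T i ≤ (j : ℕ) + 1) := by
    by_cases hjn : (j : ℕ) < n
    · have hred : (∀ j' : Fin (n + 1), (j' : ℕ) = (j : ℕ) + 1 → sortedTab T i j' = true) ↔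
          sortedTab T i ⟨(j : ℕ) + 1, by omega⟩ = true := by
        constructor
        · intro h; exact h _ rfl
        · intro h j' hj'; rwa [show j' = ⟨(j : ℕ) + 1, by omega⟩ from Fin.ext hj']
      rw [hred, sorted_char hT]
      have hv : ((⟨(j : ℕ) + 1, by omega⟩ : Fin (n + 1)) : ℕ) = (j : ℕ) + 1 := rfl
      rw [hv]
      omega
    · have hjeq : (j : ℕ) = n := by omega
      constructor
      · intro _; exact Or.inl hjeq
      · intro _ j' hj'
        exact absurd hj' (by have := j'.isLt; omega)
  by_cases him : (i : ℕ) < m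
  · set i1 : Fin (m + 1) := ⟨(i : ℕ) + 1, Nat.succ_lt_succ him⟩ with hi1def
    have hired : (∀ i' : Fin (m + 1), (i' : ℕ) = (i : ℕ) + 1 → sortedTab T i' j = false) ↔
        sortedTab T i1 j = false := by
      constructor
      · intro h; exact h _ rfl
      · intro h i' hi'; rwa [show i' = i1 from Fin.ext hi']
    have hS1false := sorted_char_false hT i1 j
    have hmono : fS T i ≤ fS T i1 := fS_mono (by rw [Fin.le_def]; simp [hi1def])
    have hpos1 : 1 ≤ fS T i1 :=
      fS_pos hT (by intro h; have := congrArg Fin.val h; simp [hi1def] at this)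
    have h1le := fS_le T i1
    have hUU : UU T i = fS T i1 - 1 := dif_pos him
    rw [hired, hfi, hSfalse, hS1false, hjq, hUU]
    omega
  · have hired : (∀ i' : Fin (m + 1), (i' : ℕ) = (i : ℕ) + 1 → sortedTab T i' j = false) ↔
        True := by
      simp only [iff_true]
      intro i' hi'
      exact absurd hi' (by have := i'.isLt; omega)
    have hUU : UU T i = n := dif_neg him
    rw [hired, hfi, hSfalse, hjq, hUU]
    simp only [and_true]
    omega

lemma UU_le (T : Tab m n) (i : Fin (m + 1)) : UU T i ≤ n := by
  unfold UU
  by_cases him : (i : ℕ) < m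
  · rw [dif_pos him]
    have := fS_le T ⟨(i : ℕ) + 1, Nat.succ_lt_succ him⟩
    omega
  · rw [dif_neg him]

lemma fS_sub_le_UU {T : Tab m n} (i : Fin (m + 1)) : fS T i - 1 ≤ UU T i := by
  unfold UU
  by_cases him : (i : ℕ) < m
  · rw [dif_pos him]
    have := fS_mono (T := T) (i := i) (i' := ⟨(i : ℕ) + 1, Nat.succ_lt_succ him⟩)
      (by rw [Fin.le_def]; simp)
    omega
  · rw [dif_neg him]
    have := fS_le T i
    omega

lemma UU_mono {T : Tab m n} {i i' : Fin (m + 1)} (h : i ≤ i') : UU T i ≤ UU T i' := by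
  unfold UU
  by_cases him' : (i' : ℕ) < m
  · have him : (i : ℕ) < m := lt_of_le_of_lt (Fin.le_def.mp h) him'
    rw [dif_pos him, dif_pos him']
    have := fS_mono (T := T) (i := ⟨(i : ℕ) + 1, Nat.succ_lt_succ him⟩)
      (i' := ⟨(i' : ℕ) + 1, Nat.succ_lt_succ him'⟩)
      (by rw [Fin.le_def]; exact Nat.succ_le_succ (Fin.le_def.mp h))
    omega
  · rw [dif_neg him']
    by_cases him : (i : ℕ) < m
    · rw [dif_pos him]
      have := fS_le T ⟨(i : ℕ) + 1, Nat.succ_lt_succ him⟩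
      omega
    · rw [dif_neg him]

lemma leftmost_step4 {T : Tab m n} (hT : IsEW T) (i : Fin (m + 1)) :
    leftmost (step4 (sortedTab T)) i = fS T i - 1 := by
  have hLn : fS T i - 1 < n + 1 := by have := fS_le T i; omega
  have hmem : fS T i - 1 ∈ {j : ℕ | ∃ h : j < n + 1, step4 (sortedTab T) i ⟨j, h⟩ = true} :=
    ⟨hLn, (step4_char hT i ⟨fS T i - 1, hLn⟩).mpr ⟨le_refl _, fS_sub_le_UU i⟩⟩
  refine le_antisymm (Nat.sInf_le hmem) (le_csInf ⟨_, hmem⟩ ?_)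
  rintro x ⟨hx, hx2⟩
  exact ((step4_char hT i ⟨x, hx⟩).mp hx2).1

lemma rightmost_step4 {T : Tab m n} (hT : IsEW T) (i : Fin (m + 1)) :
    rightmost (step4 (sortedTab T)) i = UU T i := by
  have hUn : UU T i < n + 1 := by have := UU_le T i; omega
  have hmem : UU T i ∈ {j : ℕ | ∃ h : j < n + 1, step4 (sortedTab T) i ⟨j, h⟩ = true} :=
    ⟨hUn, (step4_char hT i ⟨UU T i, hUn⟩).mpr ⟨by have := fS_sub_le_UU (T := T) i; exact this, le_refl _⟩⟩
  refine le_antisymm (csSup_le ⟨_, hmem⟩ ?_) (le_csSup ⟨n, ?_⟩ hmem)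
  · rintro x ⟨hx, hx2⟩
    exact ((step4_char hT i ⟨x, hx⟩).mp hx2).2
  · rintro x ⟨hx, _⟩
    omega

lemma fS_at_top {T : Tab m n} (hT : IsEW T) (j : Fin (n + 1))
    (h : gS T j - 1 < m + 1) : fS T ⟨gS T j - 1, h⟩ ≤ (j : ℕ) := by
  have h1 : sortedTab T ⟨gS T j - 1, h⟩ j = true := by
    rw [sorted_char' hT]
    show gS T j - 1 < gS T j
    have := gS_pos hT j
    omega
  rw [sorted_char hT] at h1
  exact h1

lemma step4_at_top {T : Tab m n} (hT : IsEW T) (j : Fin (n + 1))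
    (h : gS T j - 1 < m + 1) : step4 (sortedTab T) ⟨gS T j - 1, h⟩ j = true := by
  rw [step4_char hT]
  refine ⟨by have := fS_at_top hT j h; omega, ?_⟩
  unfold UU
  by_cases him : ((⟨gS T j - 1, h⟩ : Fin (m + 1)) : ℕ) < m
  · rw [dif_pos him]
    show (j : ℕ) ≤ fS T ⟨gS T j - 1 + 1, Nat.succ_lt_succ him⟩ - 1
    have hgp := gS_pos hT j
    have h2 : ¬ fS T ⟨gS T j - 1 + 1, Nat.succ_lt_succ him⟩ ≤ (j : ℕ) := by
      rw [← sorted_char hT, sorted_char' hT]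
      show ¬ (gS T j - 1 + 1 < gS T j)
      omega
    have h1pos : 1 ≤ fS T ⟨gS T j - 1 + 1, Nat.succ_lt_succ him⟩ :=
      fS_pos hT (by intro hcon; have := congrArg Fin.val hcon; simp at this)
    omega
  · rw [dif_neg him]
    omega

lemma step4_top_le {T : Tab m n} (hT : IsEW T) {i : Fin (m + 1)} {j : Fin (n + 1)}
    (h : step4 (sortedTab T) i j = true) : gS T j - 1 ≤ (i : ℕ) := by
  by_contra hc
  push_neg at hc
  have him : (i : ℕ) < m := by have := gS_le T j; omega
  have h2 := ((step4_char hT i j).mp h).2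
  unfold UU at h2
  rw [dif_pos him] at h2
  have hle : fS T ⟨(i : ℕ) + 1, Nat.succ_lt_succ him⟩ ≤ (j : ℕ) := by
    rw [← sorted_char hT, sorted_char' hT]
    show (i : ℕ) + 1 < gS T j
    omega
  have h1pos : 1 ≤ fS T ⟨(i : ℕ) + 1, Nat.succ_lt_succ him⟩ :=
    fS_pos hT (by intro hcon; have := congrArg Fin.val hcon; simp at this)
  omega

lemma topmost_step4 {T : Tab m n} (hT : IsEW T) (j : Fin (n + 1)) :
    topmost (step4 (sortedTab T)) j = gS T j - 1 := by
  have hI : gS T j - 1 < m + 1 := by have := gS_le T j; omega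
  have hmem : gS T j - 1 ∈ {i : ℕ | ∃ h : i < m + 1, step4 (sortedTab T) ⟨i, h⟩ j = true} :=
    ⟨hI, step4_at_top hT j hI⟩
  refine le_antisymm (Nat.sInf_le hmem) (le_csInf ⟨_, hmem⟩ ?_)
  rintro x ⟨hx, hx2⟩
  exact step4_top_le hT hx2

lemma ones_step4 {T : Tab m n} (hT : IsEW T) : ones (step4 (sortedTab T)) = m + n + 1 := by
  classical
  rw [ones]
  have hcard : (((Finset.univ : Finset (Fin (m + 1) ⊕ Fin (n + 1)))).erase
      (Sum.inl 0)).card = m + n + 1 := by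
    rw [Finset.card_erase_of_mem (Finset.mem_univ _)]
    simp [Fintype.card_sum]
    omega
  rw [← hcard]
  refine Finset.card_nbij'
    (i := fun p : Fin (m + 1) × Fin (n + 1) =>
      if fS T p.1 ≤ (p.2 : ℕ) then Sum.inr p.2 else Sum.inl p.1)
    (j := fun x : Fin (m + 1) ⊕ Fin (n + 1) => Sum.elim
      (fun i => (i, (⟨fS T i - 1, by have := fS_le T i; omega⟩ : Fin (n + 1))))
      (fun j => ((⟨gS T j - 1, by have := gS_le T j; omega⟩ : Fin (m + 1)), j)) x)
    ?_ ?_ ?_ ?_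
  · intro p hp
    beta_reduce
    simp only [Finset.coe_filter, Finset.mem_filter, Finset.mem_univ, true_and, Set.mem_setOf_eq] at hp
    by_cases hif : fS T p.1 ≤ (p.2 : ℕ)
    · rw [if_pos hif]
      simp
    · rw [if_neg hif]
      refine Finset.mem_erase.mpr ⟨?_, Finset.mem_univ _⟩
      intro hcon
      have hp1 : p.1 = 0 := by simpa using hcon
      rw [hp1, fS_zero hT] at hif
      omega
  · intro x hx
    beta_reduce
    simp only [Finset.coe_filter, Finset.mem_filter, Finset.mem_univ, true_and, Set.mem_setOf_eq]
    match x with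
    | Sum.inl i =>
      have hi0 : i ≠ 0 := by
        intro hcon
        rw [hcon] at hx
        exact (Finset.mem_erase.mp hx).1 rfl
      simp only [Sum.elim_inl]
      rw [step4_char hT]
      exact ⟨le_refl _, by have := fS_sub_le_UU (T := T) i; exact this⟩
    | Sum.inr j =>
      simp only [Sum.elim_inr]
      exact step4_at_top hT j _
  · intro p hp
    beta_reduce
    simp only [Finset.coe_filter, Finset.mem_filter, Finset.mem_univ, true_and, Set.mem_setOf_eq] at hp
    by_cases hif : fS T p.1 ≤ (p.2 : ℕ)
    · rw [if_pos hif]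
      simp only [Sum.elim_inr]
      have h1 : gS T p.2 - 1 ≤ (p.1 : ℕ) := step4_top_le hT hp
      have h2 : (p.1 : ℕ) < gS T p.2 := by
        rw [← sorted_char' hT, sorted_char hT]
        exact hif
      have : gS T p.2 - 1 = (p.1 : ℕ) := by omega
      exact Prod.ext (Fin.ext this) rfl
    · rw [if_neg hif]
      simp only [Sum.elim_inl]
      have h1 := ((step4_char hT p.1 p.2).mp hp).1
      have : fS T p.1 - 1 = (p.2 : ℕ) := by omega
      exact Prod.ext rfl (Fin.ext this)
  · intro x hx
    beta_reduce
    match x with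
    | Sum.inl i =>
      have hi0 : i ≠ 0 := by
        intro hcon
        rw [hcon] at hx
        exact (Finset.mem_erase.mp hx).1 rfl
      have hpos := fS_pos hT hi0
      simp only [Sum.elim_inl]
      exact if_neg (by show ¬ fS T i ≤ fS T i - 1; omega)
    | Sum.inr j =>
      simp only [Sum.elim_inr]
      exact if_pos (fS_at_top hT j _)

lemma rl_incr {T : Tab m n} (hT : IsEW T) (i i' : Fin (m + 1))
    (hlm : leftmost (step4 (sortedTab T)) i = leftmost (step4 (sortedTab T)) i')
    (hii : i < i') : sortRows T i < sortRows T i' := by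
  rw [leftmost_step4 hT, leftmost_step4 hT] at hlm
  have hmono : fS T i ≤ fS T i' := fS_mono (le_of_lt hii)
  by_cases heq : fS T i = fS T i'
  · refine sortRows_stable T i i' hii ?_
    rw [← fS_eq, ← fS_eq]
    exact heq
  · have hi0 : fS T i = 0 := by omega
    have hσ : sortRows T i = 0 := by
      by_contra hne
      have : 1 ≤ rkey T (sortRows T i) := rkey_pos hT hne
      rw [← fS_eq] at this
      omega
    rw [hσ]
    apply Fin.pos_of_ne_zero
    intro hcon
    have : sortRows T i = sortRows T i' := by rw [hσ, hcon]
    exact (ne_of_lt hii) ((sortRows T).injective this)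

lemma cl_incr {T : Tab m n} (hT : IsEW T) (j j' : Fin (n + 1))
    (htm : topmost (step4 (sortedTab T)) j = topmost (step4 (sortedTab T)) j')
    (hjj : j < j') : sortCols T j < sortCols T j' := by
  rw [topmost_step4 hT, topmost_step4 hT] at htm
  have h1 := gS_pos hT j
  have h2 := gS_pos hT j'
  refine sortCols_stable T j j' hjj ?_
  rw [← gS_eq, ← gS_eq]
  omega

/-- For every rectangular EW-tableau `T` with `m+1` rows and
`n+1` columns, `φ(T)` is a labelled ribbon parallelogram polyomino of type
`(m+1, n+1)`: `φ` maps `EW` into `LRib`. -/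
theorem phi_mem_LRib {m n : ℕ} (T : Tab m n) (hT : IsEW T) :
    IsLRib (phi T) := by
  refine ⟨⟨⟨?_, ?_, ?_, ?_, ?_, ?_⟩, ?_, ?_, ?_⟩, ?_⟩
  · -- top-left corner
    show step4 (sortedTab T) 0 0 = true
    rw [step4_char hT]
    refine ⟨?_, Nat.zero_le _⟩
    rw [fS_zero hT]
    exact Nat.zero_le _
  · -- bottom-right corner
    show step4 (sortedTab T) (Fin.last m) (Fin.last n) = true
    rw [step4_char hT]
    have h1 := fS_le T (Fin.last m)
    have h2 : UU T (Fin.last m) = n := by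
      unfold UU
      rw [dif_neg (by simp)]
    rw [h2]
    simp only [Fin.val_last]
    omega
  · -- rows nonempty
    intro i
    have hlt : fS T i - 1 < n + 1 := by have := fS_le T i; omega
    exact ⟨⟨fS T i - 1, hlt⟩, (step4_char hT i ⟨fS T i - 1, hlt⟩).mpr
      ⟨le_refl _, fS_sub_le_UU i⟩⟩
  · -- rows contiguous
    intro i j j' j'' hj1 hj2 h1 h2
    replace h1 : step4 (sortedTab T) i j = true := h1
    replace h2 : step4 (sortedTab T) i j'' = true := h2
    show step4 (sortedTab T) i j' = true
    rw [step4_char hT] at h1 h2 ⊢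
    have hv1 : (j : ℕ) ≤ (j' : ℕ) := hj1
    have hv2 : (j' : ℕ) ≤ (j'' : ℕ) := hj2
    exact ⟨le_trans h1.1 hv1, le_trans hv2 h2.2⟩
  · -- leftmost monotone
    intro i i' hii
    show leftmost (step4 (sortedTab T)) i ≤ leftmost (step4 (sortedTab T)) i'
    rw [leftmost_step4 hT, leftmost_step4 hT]
    have := fS_mono (T := T) hii
    omega
  · -- rightmost monotone
    intro i i' hii
    show rightmost (step4 (sortedTab T)) i ≤ rightmost (step4 (sortedTab T)) i'
    rw [rightmost_step4 hT, rightmost_step4 hT]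
    exact UU_mono hii
  · -- top row labelled v 0
    exact sortRows_zero hT
  · -- row labels increasing
    exact fun i i' h hii => rl_incr hT i i' h hii
  · -- column labels increasing
    exact fun j j' h hjj => cl_incr hT j j' h hjj
  · -- number of ones
    exact ones_step4 hT

end EWPaper
end

section
/- The map ψ is a left inverse of φ: for every rectangular EW-tableau T with m rows and n columns, ψ(φ(T)) = T. -/
/- Combinatorial objects from "EW-tableaux and parallelogram polyominoes".
A tableau of type `(m+1, n+1)` (i.e. with `m+1` rows and `n+1` columns) is a
0/1-filling, encoded as a function to `Bool` (`true` = 1).  Rows are indexed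
top to bottom, columns left to right, both starting at `0`.  The row labelled
`v i` (for `i < m+1`) and the column labelled `v ((m+1)+j)` (for `j < n+1`)
are recorded through permutations `rl`, `cl` of `Fin (m+1)`, `Fin (n+1)`. -/

namespace EWPaper

variable {m n : ℕ}

/-- Key abstract lemma: if `S` has 0s to the left of every 0 in each row,
its top row is all 1s, and every other row starts with a 0, then
`psiPre (step4 S) = S`. -/
lemma psiPre_step4 (S : Tab m n)
    (hmono : ∀ (a : Fin (m+1)) (k j : Fin (n+1)), k ≤ j → S a k = true → S a j = true)
    (htop : ∀ b, S 0 b = true)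
    (hleft : ∀ a : Fin (m+1), a ≠ 0 → S a 0 = false) :
    psiPre (step4 S) = S := by
  funext a b
  cases h : S a b with
  | false =>
    have ha : a ≠ 0 := by
      rintro rfl
      rw [htop b] at h
      exact Bool.noConfusion h
    simp only [psiPre, decide_eq_false_iff_not]
    rintro (⟨rfl, rfl⟩ | ⟨k, hk, hstep⟩)
    · exact ha rfl
    · have hSk : S a k = false := by
        cases hSk : S a k with
        | false => rfl
        | true => rw [hmono a k b (le_of_lt hk) hSk] at h; exact Bool.noConfusion h
      have hk1 : (k : ℕ) + 1 < n + 1 :=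
        Nat.succ_lt_succ (lt_of_lt_of_le hk (Nat.lt_succ_iff.mp b.isLt))
      have hSk1 : S a ⟨(k : ℕ) + 1, hk1⟩ = false := by
        cases hSk1 : S a ⟨(k : ℕ) + 1, hk1⟩ with
        | false => rfl
        | true =>
          have : S a b = true := hmono a ⟨(k : ℕ) + 1, hk1⟩ b (by exact hk) hSk1
          rw [this] at h; exact Bool.noConfusion h
      simp only [step4, hSk, Bool.false_and, Bool.not_false, Bool.true_and,
        Bool.false_or, decide_eq_true_eq] at hstep
      have := hstep ⟨(k : ℕ) + 1, hk1⟩ rfl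
      rw [hSk1] at this; exact Bool.noConfusion this
  | true =>
    simp only [psiPre, decide_eq_true_eq]
    by_cases hb : b = 0
    · left
      subst hb
      constructor
      · by_contra ha
        rw [hleft a ha] at h; exact Bool.noConfusion h
      · rfl
    · right
      have hb0 : (0 : Fin (n+1)) < b := by
        rcases Fin.eq_zero_or_eq_succ b with rfl | ⟨c, rfl⟩
        · exact absurd rfl hb
        · exact Fin.succ_pos c
      by_cases ha : a = 0
      · -- use k = 0 : step4 fires at (0,0)
        subst ha
        refine ⟨0, hb0, ?_⟩
        have h00 : S 0 0 = true := htop 0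
        have hcond : ∀ i' : Fin (m + 1), (i' : ℕ) = ((0 : Fin (m+1)) : ℕ) + 1 →
            S i' 0 = false := by
          intro i' hi'
          apply hleft
          intro hz
          rw [hz] at hi'
          simp at hi'
        simp only [step4, h00, Bool.true_and, Bool.not_true, Bool.false_and,
          Bool.or_false, decide_eq_true_eq]
        exact hcond
      · -- leftmost 1 of row a: use Nat.find
        have hex : ∃ c : ℕ, ∃ hc : c < n + 1, S a ⟨c, hc⟩ = true :=
          ⟨(b : ℕ), b.isLt, by simpa using h⟩
        classical
        let c := Nat.find hex
        obtain ⟨hc, hSc⟩ : ∃ hc : c < n + 1, S a ⟨c, hc⟩ = true := Nat.find_spec hex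
        have hcb : c ≤ (b : ℕ) := Nat.find_min' hex ⟨b.isLt, by simpa using h⟩
        have hc0 : c ≠ 0 := by
          intro hc0
          have : S a 0 = true := by
            have := hSc
            rw [show (⟨c, hc⟩ : Fin (n+1)) = 0 from by ext; simp [hc0]] at this
            exact this
          rw [hleft a ha] at this; exact Bool.noConfusion this
        have hc1 : c - 1 < n + 1 := lt_of_le_of_lt (Nat.sub_le _ _) hc
        have hSc1 : S a ⟨c - 1, hc1⟩ = false := by
          cases hS : S a ⟨c - 1, hc1⟩ with
          | false => rfl
          | true =>
            have := Nat.find_min hex (m := c - 1) (Nat.sub_lt (Nat.pos_of_ne_zero hc0) one_pos)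
            exact absurd ⟨hc1, hS⟩ this
        refine ⟨⟨c - 1, hc1⟩, ?_, ?_⟩
        · show (c - 1 : ℕ) < (b : ℕ)
          exact lt_of_lt_of_le (Nat.sub_lt (Nat.pos_of_ne_zero hc0) one_pos) hcb
        · have hcond : ∀ j' : Fin (n + 1), (j' : ℕ) = (c - 1) + 1 → S a j' = true := by
            intro j' hj'
            have : j' = ⟨c, hc⟩ := by
              ext; rw [hj', Nat.sub_add_cancel (Nat.pos_of_ne_zero hc0)]
            rw [this]; exact hSc
          simp only [step4, hSc1, Bool.false_and, Bool.not_false, Bool.true_and,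
            Bool.false_or, decide_eq_true_eq]
          exact hcond

/-- `ψ` is a left inverse of `φ`: for every rectangular
EW-tableau `T`, `ψ(φ(T)) = T`. -/
theorem psi_phi {m n : ℕ} (T : Tab m n) (hT : IsEW T) :
    psi (phi T) = T := by
  classical
  obtain ⟨h1, h2, h3⟩ := hT
  set σ := sortRows T with hσ
  set τ := sortCols T with hτ
  -- column 1-sets
  set colset : Fin (n+1) → Finset (Fin (m+1)) :=
    fun j => Finset.univ.filter (fun i => T i j = true) with hcolset
  have memcol : ∀ (i : Fin (m+1)) (j : Fin (n+1)), i ∈ colset j ↔ T i j = true := by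
    intro i j; simp [hcolset]
  -- comparability of columns
  have comp : ∀ j j' : Fin (n+1), colset j ⊆ colset j' ∨ colset j' ⊆ colset j := by
    intro j j'
    by_contra hcon
    push_neg at hcon
    obtain ⟨hns1, hns2⟩ := hcon
    obtain ⟨a, ha1, ha2⟩ := Finset.not_subset.mp hns1
    obtain ⟨a', ha1', ha2'⟩ := Finset.not_subset.mp hns2
    rw [memcol] at ha1 ha1'
    have haa : a ≠ a' := by
      rintro rfl
      exact ha2 ((memcol _ _).mpr ha1')
    have hjj : j ≠ j' := by
      rintro rfl
      exact ha2 ((memcol _ _).mpr ha1)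
    rcases h3 a a' j j' haa hjj ha1 ha1' with hl | hr
    · exact ha2 ((memcol _ _).mpr hl)
    · exact ha2' ((memcol _ _).mpr hr)
  -- sorted columns: 1-sets increase left to right
  have hcm : Monotone ((fun j => (Finset.univ.filter fun i => T i j = true).card) ∘ τ) :=
    Tuple.monotone_sort _
  have key : ∀ k j : Fin (n+1), k ≤ j → colset (τ k) ⊆ colset (τ j) := by
    intro k j hkj
    rcases comp (τ k) (τ j) with hs | hs
    · exact hs
    · have hcard : (colset (τ k)).card ≤ (colset (τ j)).card := hcm hkj
      rw [Finset.eq_of_subset_of_card_le hs hcard]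
  -- sorted rows : row σ 0 is all ones
  have hrm : Monotone ((fun i => (Finset.univ.filter fun j => T i j = false).card) ∘ σ) :=
    Tuple.monotone_sort _
  have hrow0 : (Finset.univ.filter fun j => T (0 : Fin (m+1)) j = false).card = 0 := by
    rw [Finset.card_eq_zero, Finset.filter_eq_empty_iff]
    intro j _
    simp [h1 j]
  have hσ0all : ∀ j, T (σ 0) j = true := by
    have hle : (Finset.univ.filter fun j => T (σ 0) j = false).card ≤ 0 := by
      have := hrm (Fin.zero_le (σ.symm 0))
      simpa [hrow0] using this
    have hempty : (Finset.univ.filter fun j => T (σ 0) j = false) = ∅ :=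
      Finset.card_eq_zero.mp (Nat.le_zero.mp hle)
    intro j
    by_contra hj
    have : j ∈ (Finset.univ.filter fun j => T (σ 0) j = false) := by
      simp [Bool.not_eq_true] at hj ⊢
      exact hj
    rw [hempty] at this
    exact absurd this (Finset.notMem_empty j)
  have hσ00 : σ 0 = 0 := by
    by_contra hne
    obtain ⟨j, hj⟩ := h2 (σ 0) hne
    rw [hσ0all j] at hj
    exact Bool.noConfusion hj
  -- the three properties of sortedTab T
  have hmono : ∀ (a : Fin (m+1)) (k j : Fin (n+1)), k ≤ j →
      sortedTab T a k = true → sortedTab T a j = true := by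
    intro a k j hkj hk
    have : σ a ∈ colset (τ k) := (memcol _ _).mpr hk
    exact (memcol _ _).mp (key k j hkj this)
  have htop : ∀ b, sortedTab T 0 b = true := fun b => hσ0all (τ b)
  have hleft : ∀ a : Fin (m+1), a ≠ 0 → sortedTab T a 0 = false := by
    intro a ha
    cases hv : sortedTab T a 0 with
    | false => rfl
    | true =>
      have hσa : σ a ≠ 0 := by
        rw [← hσ00]
        exact fun hc => ha (σ.injective hc)
      obtain ⟨c, hc⟩ := h2 (σ a) hσa
      have h0c : colset (τ 0) ⊆ colset (τ (τ.symm c)) :=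
        key 0 (τ.symm c) (Fin.zero_le _)
      rw [Equiv.apply_symm_apply] at h0c
      have : σ a ∈ colset c := h0c ((memcol _ _).mpr hv)
      rw [(memcol _ _).mp this] at hc
      exact Bool.noConfusion hc
  have hmain := psiPre_step4 (sortedTab T) hmono htop hleft
  funext i j
  show psiPre (step4 (sortedTab T)) (σ.symm i) (τ.symm j) = T i j
  rw [hmain]
  show T (σ (σ.symm i)) (τ (τ.symm j)) = T i j
  rw [Equiv.apply_symm_apply, Equiv.apply_symm_apply]

end EWPaper
end

section
/- The map Φ : MEW_{m,n} → LPara_{m,n} is injective: if M₁ = (T₁,a) and M₂ = (T₂,b) are marked rectangular EW-tableaux with Φ(M₁) = Φ(M₂), then T₁ = T₂ and a = b. -/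
/- Combinatorial objects from "EW-tableaux and parallelogram polyominoes".
A tableau of type `(m+1, n+1)` (i.e. with `m+1` rows and `n+1` columns) is a
0/1-filling, encoded as a function to `Bool` (`true` = 1).  Rows are indexed
top to bottom, columns left to right, both starting at `0`.  The row labelled
`v i` (for `i < m+1`) and the column labelled `v ((m+1)+j)` (for `j < n+1`)
are recorded through permutations `rl`, `cl` of `Fin (m+1)`, `Fin (n+1)`. -/

namespace EWPaper

variable {m n : ℕ}

namespace PhiInj
open Finset

lemma card_filter_val (N : ℕ) (p : ℕ → Prop) [DecidablePred p] :
    ((univ : Finset (Fin N)).filter fun j : Fin N => p (j : ℕ)).card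
      = ((range N).filter p).card := by
  rw [Finset.card_filter, Finset.card_filter]
  exact Fin.sum_univ_eq_sum_range (fun j => if p j then 1 else 0) N

lemma card_filter_lt_val (N b : ℕ) (hb : b ≤ N) :
    ((univ : Finset (Fin N)).filter fun j : Fin N => (j : ℕ) < b).card = b := by
  rw [card_filter_val N (fun j => j < b)]
  have : (range N).filter (fun j => j < b) = range b := by
    ext j; simp only [mem_filter, mem_range]; omega
  rw [this, card_range]

lemma card_filter_le_val (N b : ℕ) (hb : b < N) :
    ((univ : Finset (Fin N)).filter fun j : Fin N => (j : ℕ) ≤ b).card = b + 1 := by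
  rw [card_filter_val N (fun j => j ≤ b)]
  have : (range N).filter (fun j => j ≤ b) = range (b+1) := by
    ext j; simp only [mem_filter, mem_range]; omega
  rw [this, card_range]

lemma card_filter_ico (N a b : ℕ) (hb : b ≤ N) :
    ((univ : Finset (Fin N)).filter fun j : Fin N => a ≤ (j:ℕ) ∧ (j:ℕ) < b).card = b - a := by
  rw [card_filter_val N (fun j => a ≤ j ∧ j < b)]
  have : (range N).filter (fun j => a ≤ j ∧ j < b) = Finset.Ico a b := by
    ext j; simp only [mem_filter, mem_range, Finset.mem_Ico]; omega
  rw [this, Nat.card_Ico]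

lemma card_filter_comp_equiv {N : ℕ} (e : Equiv.Perm (Fin N)) (p : Fin N → Prop)
    [DecidablePred p] :
    ((univ : Finset (Fin N)).filter fun x => p (e x)).card
      = ((univ : Finset (Fin N)).filter p).card := by
  apply Finset.card_equiv e
  intro i; simp

lemma lt_card_iff_of_monotone {N : ℕ} {z : Fin N → ℕ} (hz : Monotone z) (c : ℕ) (x : Fin N) :
    z x ≤ c ↔ (x:ℕ) < ((univ : Finset (Fin N)).filter fun y => z y ≤ c).card := by
  constructor
  · intro hx
    have hsub : (univ : Finset (Fin N)).filter (fun j : Fin N => (j:ℕ) ≤ (x:ℕ)) ⊆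
        (univ : Finset (Fin N)).filter fun y => z y ≤ c := by
      intro y hy
      simp only [mem_filter, mem_univ, true_and] at hy ⊢
      exact le_trans (hz (show y ≤ x from hy)) hx
    have := Finset.card_le_card hsub
    rw [card_filter_le_val N x x.isLt] at this
    omega
  · intro hx
    by_contra hc
    have hsub : ((univ : Finset (Fin N)).filter fun y => z y ≤ c) ⊆
        (univ : Finset (Fin N)).filter (fun j : Fin N => (j:ℕ) < (x:ℕ)) := by
      intro y hy
      simp only [mem_filter, mem_univ, true_and] at hy ⊢
      by_contra hyx
      push_neg at hyx
      exact hc (le_trans (hz (show x ≤ y from hyx)) hy)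
    have := Finset.card_le_card hsub
    rw [card_filter_lt_val N x (le_of_lt x.isLt)] at this
    omega

lemma perm_eq_of_strictMonoOn_fibers {N : ℕ} {α β : Equiv.Perm (Fin N)} (q : Fin N → ℕ)
    (hα : ∀ x y : Fin N, x < y → q x = q y → α x < α y)
    (hβ : ∀ x y : Fin N, x < y → q x = q y → β x < β y)
    (him : ∀ v, (univ.filter fun x => q x = v).image α
        = (univ.filter fun x => q x = v).image β) :
    α = β := by
  have key : ∀ k : ℕ, ∀ x : Fin N, (x:ℕ) = k → α x = β x := by
    intro k
    induction k using Nat.strong_induction_on with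
    | _ k ihn =>
      intro x hxk
      subst hxk
      have ih : ∀ y : Fin N, y < x → α y = β y := fun y hy => ihn (y:ℕ) hy y rfl
      have hmem1 : α x ∈ (univ.filter fun y => q y = q x).image β := by
        rw [← him]; exact mem_image_of_mem _ (by simp)
      obtain ⟨y, hy, hyx⟩ := Finset.mem_image.mp hmem1
      simp only [mem_filter, mem_univ, true_and] at hy
      have h1 : β x ≤ α x := by
        rcases lt_trichotomy y x with hlt | heq | hgt
        · have heq2 : α y = β y := ih y hlt
          exact absurd (α.injective (heq2.trans hyx)) (ne_of_lt hlt)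
        · exact le_of_eq (heq ▸ hyx)
        · exact le_of_lt (hyx ▸ (hβ x y hgt hy.symm))
      have hmem2 : β x ∈ (univ.filter fun y => q y = q x).image α := by
        rw [him]; exact mem_image_of_mem _ (by simp)
      obtain ⟨y', hy', hy'x⟩ := Finset.mem_image.mp hmem2
      simp only [mem_filter, mem_univ, true_and] at hy'
      have h2 : α x ≤ β x := by
        rcases lt_trichotomy y' x with hlt | heq | hgt
        · have heq2 : α y' = β y' := ih y' hlt
          exact absurd (β.injective (heq2.symm.trans hy'x)) (ne_of_lt hlt)
        · exact le_of_eq (heq ▸ hy'x)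
        · exact le_of_lt (hy'x ▸ (hα x y' hgt hy'.symm))
      exact le_antisymm h2 h1
  exact Equiv.ext fun x => key (x:ℕ) x rfl

lemma exists_le_perm {N : ℕ} (σ : Equiv.Perm (Fin N)) (i : Fin N) :
    ∃ x : Fin N, (x:ℕ) ≤ (i:ℕ) ∧ (i:ℕ) ≤ ((σ.symm x : Fin N):ℕ) := by
  by_contra hc
  push_neg at hc
  have hsub : ((univ : Finset (Fin N)).filter fun x : Fin N => (x:ℕ) ≤ (i:ℕ)).image σ.symm ⊆
      (univ : Finset (Fin N)).filter fun y : Fin N => (y:ℕ) < (i:ℕ) := by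
    intro y hy
    obtain ⟨x, hx, rfl⟩ := Finset.mem_image.mp hy
    simp only [mem_filter, mem_univ, true_and] at hx ⊢
    exact hc x hx
  have hcard := Finset.card_le_card hsub
  rw [Finset.card_image_of_injective _ σ.symm.injective,
    card_filter_le_val N i i.isLt, card_filter_lt_val N i (le_of_lt i.isLt)] at hcard
  omega

section Defs
variable {m n : ℕ}

def rp (M : MEW m n) : Equiv.Perm (Fin (m+1)) := sortRows M.T
def cp (M : MEW m n) : Equiv.Perm (Fin (n+1)) := sortCols M.T
def SS (M : MEW m n) : Tab m n := sortedTab M.T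
def RR (M : MEW m n) : Tab m n := step4 (SS M)
def cnt0 (M : MEW m n) (i : Fin (m+1)) : ℕ :=
  (univ.filter fun j : Fin (n+1) => M.T i j = false).card
def cnt1 (M : MEW m n) (y : Fin (n+1)) : ℕ :=
  (univ.filter fun i : Fin (m+1) => M.T i y = true).card
def z (M : MEW m n) (i : Fin (m+1)) : ℕ :=
  (univ.filter fun j : Fin (n+1) => SS M i j = false).card
def Zn (M : MEW m n) (k : ℕ) : ℕ := if h : k < m + 1 then z M ⟨k, h⟩ else n + 1
def Ecnt (M : MEW m n) (c : ℕ) : ℕ := (univ.filter fun x : Fin (m+1) => z M x ≤ c).card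
def Fcnt (M : MEW m n) (v : ℕ) : ℕ := (univ.filter fun x : Fin (m+1) => z M x < v).card
def wv (M : MEW m n) (i : Fin (m+1)) : ℕ := Zn M (Fcnt M (z M i) - 1)
def Vv (M : MEW m n) (c : ℕ) : ℕ := Zn M (Ecnt M c - 1)
def i0v (M : MEW m n) (c : ℕ) : ℕ := Fcnt M (Vv M c)

lemma z_eq_cnt0 (M : MEW m n) (i : Fin (m+1)) : z M i = cnt0 M (rp M i) := by
  unfold z cnt0 SS sortedTab
  exact card_filter_comp_equiv (cp M) (fun j => M.T (rp M i) j = false)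

lemma rp_sort (M : MEW m n) : rp M = Tuple.sort (cnt0 M) := rfl
lemma cp_sort (M : MEW m n) : cp M = Tuple.sort (cnt1 M) := rfl

lemma z_mono (M : MEW m n) : Monotone (z M) := by
  have h := (Tuple.eq_sort_iff.mp (rp_sort M)).1
  intro a b hab
  rw [z_eq_cnt0, z_eq_cnt0]
  exact h hab

lemma rp_stab (M : MEW m n) : ∀ x y : Fin (m+1), x < y → z M x = z M y →
    rp M x < rp M y := by
  intro x y hxy hz
  exact (Tuple.eq_sort_iff.mp (rp_sort M)).2 x y hxy
    (by rw [← z_eq_cnt0, ← z_eq_cnt0]; exact hz)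

lemma cnt1_cp_mono (M : MEW m n) : Monotone (cnt1 M ∘ cp M) :=
  (Tuple.eq_sort_iff.mp (cp_sort M)).1

lemma cp_stab (M : MEW m n) : ∀ x y : Fin (n+1), x < y → cnt1 M (cp M x) = cnt1 M (cp M y) →
    cp M x < cp M y := fun x y hxy hc =>
  (Tuple.eq_sort_iff.mp (cp_sort M)).2 x y hxy hc

/-- Column supports of an EW tableau: smaller 1-count implies column support inclusion. -/
lemma col_mono {M : MEW m n} (hM : IsMEW M) (c d : Fin (n+1)) (hcd : cnt1 M c ≤ cnt1 M d) :
    ∀ i, M.T i c = true → M.T i d = true := by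
  by_cases hsub : ∀ i, M.T i c = true → M.T i d = true
  · exact hsub
  push_neg at hsub
  obtain ⟨a, hac, had⟩ := hsub
  have hcd' : c ≠ d := fun hcd' => had (hcd' ▸ hac)
  have hrev : ∀ b, M.T b d = true → M.T b c = true := by
    intro b hbd
    by_contra hbc
    have hab : a ≠ b := fun hab => had (hab ▸ hbd)
    rcases hM.1.2.2 a b c d hab hcd' hac hbd with h' | h'
    · exact had h'
    · exact hbc h'
  have hsubf : (univ.filter fun i : Fin (m+1) => M.T i d = true) ⊆
      (univ.filter fun i : Fin (m+1) => M.T i c = true) := by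
    intro i hi
    simp only [mem_filter, mem_univ, true_and] at hi ⊢
    exact hrev i hi
  have : (univ.filter fun i : Fin (m+1) => M.T i c = true)
      = (univ.filter fun i : Fin (m+1) => M.T i d = true) :=
    (Finset.eq_of_subset_of_card_le hsubf hcd).symm
  intro i hic
  have : i ∈ univ.filter fun i : Fin (m+1) => M.T i d = true := by
    rw [← this]; simp only [mem_filter, mem_univ, true_and]; exact hic
  simpa using this

/-- In the sorted tableau, trues in each row form a suffix. -/
lemma SS_prefix {M : MEW m n} (hM : IsMEW M) (i : Fin (m+1)) :
    ∀ j j' : Fin (n+1), j ≤ j' → SS M i j = true → SS M i j' = true := by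
  intro j j' hjj hj
  exact col_mono hM (cp M j) (cp M j') (cnt1_cp_mono M hjj) (rp M i) hj

lemma SS_iff {M : MEW m n} (hM : IsMEW M) (i : Fin (m+1)) (j : Fin (n+1)) :
    SS M i j = true ↔ z M i ≤ (j:ℕ) := by
  have hg : Monotone (fun j : Fin (n+1) => if SS M i j = false then 0 else 1) := by
    intro a b hab
    dsimp only
    by_cases ha : SS M i a = false
    · simp [ha]
    · have ha' : SS M i a = true := by simp at ha; exact ha
      have hb' : SS M i b = true := SS_prefix hM i a b hab ha'
      simp [ha', hb']
  have key := lt_card_iff_of_monotone hg 0 j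
  have hfe : (univ.filter fun y : Fin (n+1) =>
      (fun j : Fin (n+1) => if SS M i j = false then 0 else 1) y ≤ 0)
      = (univ.filter fun j : Fin (n+1) => SS M i j = false) := by
    apply Finset.filter_congr
    intro y _
    by_cases hy : SS M i y = false <;> simp [hy]
  rw [hfe] at key
  constructor
  · intro ht
    by_contra hlt
    push_neg at hlt
    have : (j:ℕ) < z M i := hlt
    have := key.mpr this
    simp [ht] at this
  · intro hz
    by_contra hf
    have hf' : SS M i j = false := by simpa using hf
    have := key.mp (by simp [hf'])
    unfold z at hz
    omega

lemma z_zero (M : MEW m n) (hM : IsMEW M) : z M 0 = 0 := by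
  have h1 : cnt0 M 0 = 0 := by
    unfold cnt0
    rw [Finset.card_eq_zero, Finset.filter_eq_empty_iff]
    intro j _
    simp [hM.1.1 j]
  have h2 : z M 0 ≤ cnt0 M 0 := by
    rw [z_eq_cnt0]
    have : (0 : Fin (m+1)) ≤ (rp M).symm 0 := Fin.zero_le _
    have hm := (Tuple.eq_sort_iff.mp (rp_sort M)).1 this
    simpa using hm
  omega

lemma cnt0_pos (M : MEW m n) (hM : IsMEW M) (i : Fin (m+1)) (hi : i ≠ 0) :
    0 < cnt0 M i := by
  obtain ⟨j, hj⟩ := hM.1.2.1 i hi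
  unfold cnt0
  rw [Finset.card_pos]
  exact ⟨j, by simp [hj]⟩

lemma rp_zero (M : MEW m n) (hM : IsMEW M) : rp M 0 = 0 := by
  by_contra hne
  have := cnt0_pos M hM (rp M 0) hne
  have h2 := z_eq_cnt0 M 0
  rw [z_zero M hM] at h2
  omega

lemma z_eq_zero_iff (M : MEW m n) (hM : IsMEW M) (x : Fin (m+1)) :
    z M x = 0 ↔ x = 0 := by
  constructor
  · intro hz
    by_contra hne
    have hre : rp M x ≠ 0 := by
      intro hre
      exact hne ((rp M).injective (hre.trans (rp_zero M hM).symm))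
    have := cnt0_pos M hM (rp M x) hre
    rw [z_eq_cnt0] at hz
    omega
  · intro hx; rw [hx]; exact z_zero M hM

lemma z_le (M : MEW m n) (x : Fin (m+1)) : z M x ≤ n + 1 := by
  unfold z
  exact le_trans (Finset.card_le_card (Finset.filter_subset _ _)) (by simp)

lemma cnt1_cp_eq_Ecnt (M : MEW m n) (hM : IsMEW M) (y : Fin (n+1)) :
    cnt1 M (cp M y) = Ecnt M (y:ℕ) := by
  unfold cnt1 Ecnt
  rw [← card_filter_comp_equiv (rp M) (fun i => M.T i (cp M y) = true)]
  apply Finset.card_nbij id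
  · intro x hx
    simp only [Finset.mem_coe, mem_filter, mem_univ, true_and, id] at hx ⊢
    rw [← SS_iff hM x y]
    exact hx
  · intro x hx y' hy' h; exact h
  · intro x hx
    simp only [Set.mem_image, Finset.coe_filter, Set.mem_setOf_eq, mem_univ, true_and] at hx ⊢
    refine ⟨x, ?_, rfl⟩
    rw [show (M.T (rp M x) (cp M y) = true) ↔ SS M x y = true from Iff.rfl, SS_iff hM x y]
    exact hx

end Defs

section RibbonFacts
variable {m n : ℕ}

lemma Zn_val (M : MEW m n) (i : Fin (m+1)) : Zn M (i:ℕ) = z M i := by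
  unfold Zn; rw [dif_pos i.isLt]

lemma Zn_last (M : MEW m n) : Zn M (m+1) = n+1 := by
  unfold Zn; rw [dif_neg (by omega)]

lemma Zn_le (M : MEW m n) (k : ℕ) : Zn M k ≤ n + 1 := by
  unfold Zn; split
  · exact z_le M _
  · exact le_refl _

lemma Zn_mono (M : MEW m n) : Monotone (Zn M) := by
  intro a b hab
  unfold Zn
  split <;> split
  · exact z_mono M (by simpa [Fin.mk_le_mk] using hab)
  · exact z_le M _
  · omega
  · exact le_refl _

lemma Zn_pos (M : MEW m n) (hM : IsMEW M) (k : ℕ) (hk : 1 ≤ k) : 1 ≤ Zn M k := by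
  unfold Zn; split
  · rename_i h
    rcases Nat.eq_zero_or_pos (z M ⟨k, h⟩) with h0 | h1
    · exfalso
      have hk0 := (z_eq_zero_iff M hM ⟨k, h⟩).mp h0
      have : k = 0 := by simpa [Fin.ext_iff] using hk0
      omega
    · exact h1
  · omega

lemma z_le_iff_Ecnt (M : MEW m n) (c : ℕ) (x : Fin (m+1)) :
    z M x ≤ c ↔ (x:ℕ) < Ecnt M c :=
  lt_card_iff_of_monotone (z_mono M) c x

lemma z_lt_iff_Fcnt (M : MEW m n) (v : ℕ) (x : Fin (m+1)) :
    z M x < v ↔ (x:ℕ) < Fcnt M v := by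
  match v with
  | 0 => simp [Fcnt]
  | v'+1 =>
    have hset : Fcnt M (v'+1) = Ecnt M v' := by
      unfold Fcnt Ecnt
      congr 1
      ext x
      simp only [mem_filter, mem_univ, true_and]
      omega
    rw [hset, ← z_le_iff_Ecnt]
    omega

lemma Ecnt_pos (M : MEW m n) (hM : IsMEW M) (c : ℕ) : 1 ≤ Ecnt M c := by
  unfold Ecnt
  exact Finset.card_pos.mpr ⟨0, by simp [z_zero M hM]⟩

lemma Ecnt_le (M : MEW m n) (c : ℕ) : Ecnt M c ≤ m + 1 := by
  unfold Ecnt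
  exact le_trans (Finset.card_le_card (Finset.filter_subset _ _)) (by simp)

lemma Ecnt_mono (M : MEW m n) : Monotone (Ecnt M) := by
  intro a b hab
  apply Finset.card_le_card
  intro x hx
  simp only [mem_filter, mem_univ, true_and] at hx ⊢
  omega

lemma RR_iff {M : MEW m n} (hM : IsMEW M) (i : Fin (m+1)) (j : Fin (n+1)) :
    RR M i j = true ↔ (Zn M (i:ℕ) ≤ (j:ℕ)+1 ∧ (j:ℕ)+1 ≤ Zn M ((i:ℕ)+1)) := by
  have hZi := Zn_val M i
  unfold RR step4
  simp only [Bool.or_eq_true, Bool.and_eq_true, decide_eq_true_eq, Bool.not_eq_true']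
  constructor
  · rintro (⟨hS, hbelow⟩ | ⟨hS, hright⟩)
    · have hz := (SS_iff hM i j).mp hS
      refine ⟨by omega, ?_⟩
      by_cases him : (i:ℕ)+1 < m+1
      · have hb := hbelow ⟨(i:ℕ)+1, him⟩ rfl
        have hzb : ¬ z M ⟨(i:ℕ)+1, him⟩ ≤ (j:ℕ) := by
          intro hle
          rw [(SS_iff hM ⟨(i:ℕ)+1, him⟩ j).mpr hle] at hb
          exact Bool.noConfusion hb
        have hZ : Zn M ((i:ℕ)+1) = z M ⟨(i:ℕ)+1, him⟩ := by unfold Zn; rw [dif_pos him]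
        omega
      · have hieq : (i:ℕ)+1 = m+1 := by have := i.isLt; omega
        rw [hieq, Zn_last]
        have := j.isLt; omega
    · have hzj : ¬ z M i ≤ (j:ℕ) := fun hle => by
        rw [(SS_iff hM i j).mpr hle] at hS; exact Bool.noConfusion hS
      constructor
      · by_cases hjn : (j:ℕ)+1 < n+1
        · have hr := hright ⟨(j:ℕ)+1, hjn⟩ rfl
          have := (SS_iff hM i ⟨(j:ℕ)+1, hjn⟩).mp hr
          simp only at this
          omega
        · have := z_le M i
          have := j.isLt
          omega
      · have h1 : Zn M ((i:ℕ)) ≤ Zn M ((i:ℕ)+1) := Zn_mono M (by omega)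
        omega
  · rintro ⟨h1, h2⟩
    by_cases hS : z M i ≤ (j:ℕ)
    · left
      refine ⟨(SS_iff hM i j).mpr hS, ?_⟩
      intro i' hi'
      have hZ : Zn M ((i:ℕ)+1) = z M i' := by
        unfold Zn; rw [dif_pos (hi' ▸ i'.isLt)]
        congr 1
        exact Fin.ext (by simp [hi'])
      rw [← Bool.not_eq_true]
      intro ht
      have := (SS_iff hM i' j).mp ht
      omega
    · right
      refine ⟨by rw [← Bool.not_eq_true]; intro ht; exact hS ((SS_iff hM i j).mp ht), ?_⟩
      intro j' hj'
      apply (SS_iff hM i j').mpr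
      omega

noncomputable def lme (M : MEW m n) (i : Fin (m+1)) : ℕ := z M i - 1

lemma leftmost_RR {M : MEW m n} (hM : IsMEW M) (i : Fin (m+1)) :
    leftmost (RR M) i = z M i - 1 := by
  have hb : z M i - 1 < n + 1 := by have := z_le M i; omega
  have hmem : (z M i - 1) ∈ {j : ℕ | ∃ h : j < n + 1, RR M i ⟨j, h⟩ = true} := by
    refine ⟨hb, ?_⟩
    rw [RR_iff hM]
    simp only [Zn_val]
    constructor
    · omega
    · rcases Nat.eq_zero_or_pos (z M i) with h0 | hpos
      · have := Zn_pos M hM ((i:ℕ)+1) (by omega)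
        omega
      · have : Zn M ((i:ℕ)) ≤ Zn M ((i:ℕ)+1) := Zn_mono M (by omega)
        rw [Zn_val] at this
        omega
  apply le_antisymm (Nat.sInf_le hmem)
  have hsm := Nat.sInf_mem (Set.nonempty_of_mem hmem)
  obtain ⟨h', hmem'⟩ := hsm
  rw [RR_iff hM] at hmem'
  rw [Zn_val] at hmem'
  simp only [Fin.val_mk] at hmem'
  omega

lemma topmost_RR {M : MEW m n} (hM : IsMEW M) (y : Fin (n+1)) :
    topmost (RR M) y = Ecnt M (y:ℕ) - 1 := by
  set t := Ecnt M (y:ℕ) - 1 with ht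
  have htm : t < m + 1 := by have := Ecnt_le M (y:ℕ); have := Ecnt_pos M hM (y:ℕ); omega
  have hmem : t ∈ {i : ℕ | ∃ h : i < m + 1, RR M ⟨i, h⟩ y = true} := by
    refine ⟨htm, ?_⟩
    rw [RR_iff hM]
    constructor
    · have : z M ⟨t, htm⟩ ≤ (y:ℕ) := by
        rw [z_le_iff_Ecnt]
        simp only
        have := Ecnt_pos M hM (y:ℕ); omega
      have hZ : Zn M t = z M ⟨t, htm⟩ := by unfold Zn; rw [dif_pos htm]
      simp only [hZ]
      omega
    · by_cases htm' : t + 1 < m + 1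
      · have : ¬ z M ⟨t+1, htm'⟩ ≤ (y:ℕ) := by
          rw [z_le_iff_Ecnt]
          simp only
          have := Ecnt_pos M hM (y:ℕ); omega
        have hZ : Zn M (t+1) = z M ⟨t+1, htm'⟩ := by unfold Zn; rw [dif_pos htm']
        simp only [hZ]
        omega
      · have : (t:ℕ)+1 = m+1 := by omega
        rw [this, Zn_last]
        have := y.isLt; omega
  apply le_antisymm (Nat.sInf_le hmem)
  have hsm := Nat.sInf_mem (Set.nonempty_of_mem hmem)
  obtain ⟨h', hmem'⟩ := hsm
  rw [RR_iff hM] at hmem'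
  simp only [Fin.val_mk] at hmem'
  obtain ⟨_, h2⟩ := hmem'
  by_contra hc
  push_neg at hc
  have hlt : sInf {i : ℕ | ∃ h : i < m + 1, RR M ⟨i, h⟩ y = true} + 1 < m + 1 := by omega
  have hZ : Zn M (sInf {i : ℕ | ∃ h : i < m + 1, RR M ⟨i, h⟩ y = true} + 1)
      = z M ⟨_ + 1, hlt⟩ := by unfold Zn; rw [dif_pos hlt]
  rw [hZ] at h2
  have hle : z M ⟨sInf {i : ℕ | ∃ h : i < m + 1, RR M ⟨i, h⟩ y = true} + 1, hlt⟩ ≤ (y:ℕ) := by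
    rw [z_le_iff_Ecnt]
    simp only [Fin.val_mk]
    omega
  omega

end RibbonFacts

section EtaFacts
variable {m n : ℕ}

lemma Fcnt_le (M : MEW m n) (v : ℕ) : Fcnt M v ≤ m + 1 := by
  unfold Fcnt
  exact le_trans (Finset.card_le_card (Finset.filter_subset _ _)) (by simp)

lemma Fcnt_pos (M : MEW m n) (hM : IsMEW M) (v : ℕ) (hv : 1 ≤ v) : 1 ≤ Fcnt M v := by
  unfold Fcnt
  exact Finset.card_pos.mpr ⟨0, by simp only [mem_filter, mem_univ, true_and, z_zero M hM]; omega⟩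

lemma wv_level (M : MEW m n) (i : Fin (m+1)) :
    ∃ x : Fin (m+1), wv M i = z M x := by
  unfold wv Zn
  have h : Fcnt M (z M i) - 1 < m + 1 := by have := Fcnt_le M (z M i); omega
  rw [dif_pos h]
  exact ⟨_, rfl⟩

lemma wv_lt (M : MEW m n) (hM : IsMEW M) (i : Fin (m+1)) (hz : z M i ≠ 0) :
    wv M i < z M i := by
  have h1 : 1 ≤ Fcnt M (z M i) := Fcnt_pos M hM _ (by omega)
  have h : Fcnt M (z M i) - 1 < m + 1 := by have := Fcnt_le M (z M i); omega
  have : wv M i = z M ⟨Fcnt M (z M i) - 1, h⟩ := by unfold wv Zn; rw [dif_pos h]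
  rw [this]
  rw [z_lt_iff_Fcnt]
  simp only [Fin.val_mk]
  omega

lemma wv_zero (M : MEW m n) (hM : IsMEW M) (i : Fin (m+1)) (hz : z M i = 0) :
    wv M i = 0 := by
  have h : Fcnt M (z M i) - 1 < m + 1 := by have := Fcnt_le M (z M i); omega
  have he : wv M i = z M ⟨Fcnt M (z M i) - 1, h⟩ := by unfold wv Zn; rw [dif_pos h]
  have h0 : Fcnt M (z M i) = 0 := by
    unfold Fcnt
    rw [Finset.card_eq_zero, Finset.filter_eq_empty_iff]
    intro x _
    omega
  rw [he]
  have : (⟨Fcnt M (z M i) - 1, h⟩ : Fin (m+1)) = 0 := by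
    rw [Fin.ext_iff]; simp [h0]
  rw [this]
  exact z_zero M hM

lemma wv_le' (M : MEW m n) (hM : IsMEW M) (i : Fin (m+1)) : wv M i ≤ z M i := by
  rcases Nat.eq_zero_or_pos (z M i) with h0 | h1
  · rw [wv_zero M hM i h0, h0]
  · exact le_of_lt (wv_lt M hM i (by omega))

lemma wv_ge (M : MEW m n) (hM : IsMEW M) (i x : Fin (m+1)) (hx : z M x < z M i) :
    z M x ≤ wv M i := by
  have h1 : 1 ≤ Fcnt M (z M i) := Fcnt_pos M hM _ (by omega)
  have h : Fcnt M (z M i) - 1 < m + 1 := by have := Fcnt_le M (z M i); omega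
  have he : wv M i = z M ⟨Fcnt M (z M i) - 1, h⟩ := by unfold wv Zn; rw [dif_pos h]
  rw [he]
  have hxf : (x:ℕ) < Fcnt M (z M i) := (z_lt_iff_Fcnt M (z M i) x).mp hx
  apply z_mono M
  show x ≤ (⟨Fcnt M (z M i) - 1, h⟩ : Fin (m+1))
  rw [Fin.le_def]
  simp only [Fin.val_mk]
  omega

lemma Vv_level (M : MEW m n) (c : ℕ) : ∃ x : Fin (m+1), Vv M c = z M x := by
  unfold Vv Zn
  have h : Ecnt M c - 1 < m + 1 := by have := Ecnt_le M c; omega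
  rw [dif_pos h]
  exact ⟨_, rfl⟩

lemma Vv_le (M : MEW m n) (hM : IsMEW M) (c : ℕ) : Vv M c ≤ c := by
  have h : Ecnt M c - 1 < m + 1 := by have := Ecnt_le M c; omega
  have he : Vv M c = z M ⟨Ecnt M c - 1, h⟩ := by unfold Vv Zn; rw [dif_pos h]
  rw [he, z_le_iff_Ecnt]
  simp only [Fin.val_mk]
  have := Ecnt_pos M hM c
  omega

lemma Vv_max (M : MEW m n) (c : ℕ) (x : Fin (m+1)) (hx : z M x ≤ c) :
    z M x ≤ Vv M c := by
  have h : Ecnt M c - 1 < m + 1 := by have := Ecnt_le M c; omega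
  have he : Vv M c = z M ⟨Ecnt M c - 1, h⟩ := by unfold Vv Zn; rw [dif_pos h]
  rw [he]
  have hxe : (x:ℕ) < Ecnt M c := (z_le_iff_Ecnt M c x).mp hx
  apply z_mono M
  rw [Fin.le_def]
  simp only [Fin.val_mk]
  omega

lemma z_lt_Vv_iff (M : MEW m n) (c : ℕ) (x : Fin (m+1)) :
    z M x < Vv M c ↔ (x:ℕ) < i0v M c :=
  z_lt_iff_Fcnt M (Vv M c) x

lemma etaRow_SS {M : MEW m n} (hM : IsMEW M) (i : Fin (m+1)) :
    etaRow (SS M) i = z M i - wv M i := by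
  unfold etaRow
  have hset : (univ.filter fun j : Fin (n+1) =>
      SS M i j = false ∧ ¬ Cornersupport (SS M) i j)
      = (univ.filter fun j : Fin (n+1) => wv M i ≤ (j:ℕ) ∧ (j:ℕ) < z M i) := by
    ext j
    simp only [mem_filter, mem_univ, true_and]
    constructor
    · rintro ⟨h0, hncs⟩
      have hjz : (j:ℕ) < z M i := by
        by_contra hle
        push_neg at hle
        rw [(SS_iff hM i j).mpr hle] at h0
        exact Bool.noConfusion h0
      refine ⟨?_, hjz⟩
      by_contra hwj
      push_neg at hwj
      obtain ⟨x, hx⟩ := wv_level M i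
      have hwlt : wv M i < z M i := wv_lt M hM i (by omega)
      have hxz : z M x < z M i := by omega
      have hjn : z M x < n + 1 := by have := z_le M i; omega
      apply hncs
      refine ⟨x, ⟨z M x, hjn⟩, ?_, ?_, ?_, ?_, ?_⟩
      · intro hxe; rw [hxe] at hxz; omega
      · intro hje; rw [Fin.ext_iff] at hje; simp only [Fin.val_mk] at hje; omega
      · rw [h0]
        have : SS M x ⟨z M x, hjn⟩ = true := (SS_iff hM x _).mpr (by simp)
        rw [this]; simp
      · rw [h0]
        rw [← Bool.not_eq_true]
        intro ht
        have := (SS_iff hM x j).mp ht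
        omega
      · rw [h0]
        rw [← Bool.not_eq_true]
        intro ht
        have := (SS_iff hM i ⟨z M x, hjn⟩).mp ht
        simp only [Fin.val_mk] at this
        omega
    · rintro ⟨hw, hz⟩
      have h0 : SS M i j = false := by
        rw [← Bool.not_eq_true]
        intro ht
        have := (SS_iff hM i j).mp ht
        omega
      refine ⟨h0, ?_⟩
      rintro ⟨i', j', hne1, hne2, hval, hcol, hrow⟩
      rw [h0] at hval hcol hrow
      have hvt : SS M i' j' = true := by
        revert hval
        cases (SS M i' j') <;> simp
      have h1 : z M i' ≤ (j':ℕ) := (SS_iff hM i' j').mp hvt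
      have h2 : ¬ z M i' ≤ (j:ℕ) := fun hle => by
        rw [(SS_iff hM i' j).mpr hle] at hcol; exact Bool.noConfusion hcol
      have h3 : ¬ z M i ≤ (j':ℕ) := fun hle => by
        rw [(SS_iff hM i j').mpr hle] at hrow; exact Bool.noConfusion hrow
      have hlt : z M i' < z M i := by omega
      have := wv_ge M hM i i' hlt
      omega
  rw [hset, card_filter_ico (n+1) (wv M i) (z M i) (z_le M i)]

lemma etaCol_SS {M : MEW m n} (hM : IsMEW M) (y : Fin (n+1)) :
    etaCol (SS M) y = Ecnt M (y:ℕ) - i0v M (y:ℕ) := by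
  unfold etaCol
  have hset : (univ.filter fun x : Fin (m+1) =>
      SS M x y = true ∧ ¬ Cornersupport (SS M) x y)
      = (univ.filter fun x : Fin (m+1) => i0v M (y:ℕ) ≤ (x:ℕ) ∧ (x:ℕ) < Ecnt M (y:ℕ)) := by
    ext x
    simp only [mem_filter, mem_univ, true_and]
    constructor
    · rintro ⟨h1, hncs⟩
      have hzy : z M x ≤ (y:ℕ) := (SS_iff hM x y).mp h1
      refine ⟨?_, (z_le_iff_Ecnt M (y:ℕ) x).mp hzy⟩
      by_contra hlt
      push_neg at hlt
      have hzV : z M x < Vv M (y:ℕ) := (z_lt_Vv_iff M (y:ℕ) x).mpr hlt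
      obtain ⟨x', hx'⟩ := Vv_level M (y:ℕ)
      have hx'y : z M x' ≤ (y:ℕ) := hx' ▸ Vv_le M hM (y:ℕ)
      have hxx' : z M x < z M x' := hx' ▸ hzV
      have hjn : z M x < n + 1 := by have := y.isLt; omega
      apply hncs
      refine ⟨x', ⟨z M x, hjn⟩, ?_, ?_, ?_, ?_, ?_⟩
      · intro he; rw [he] at hxx'; omega
      · intro hje; rw [Fin.ext_iff] at hje; simp only [Fin.val_mk] at hje; omega
      · rw [h1]
        have : SS M x' ⟨z M x, hjn⟩ = false := by
          rw [← Bool.not_eq_true]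
          intro ht
          have := (SS_iff hM x' _).mp ht
          simp only [Fin.val_mk] at this
          omega
        rw [this]; simp
      · rw [h1]
        exact (SS_iff hM x' y).mpr hx'y
      · rw [h1]
        exact (SS_iff hM x _).mpr (by simp)
    · rintro ⟨hi0, hE⟩
      have hzy : z M x ≤ (y:ℕ) := (z_le_iff_Ecnt M (y:ℕ) x).mpr hE
      refine ⟨(SS_iff hM x y).mpr hzy, ?_⟩
      rintro ⟨x', j', hne1, hne2, hval, hcol, hrow⟩
      have h1 : SS M x y = true := (SS_iff hM x y).mpr hzy
      rw [h1] at hval hcol hrow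
      have hvf : SS M x' j' = false := by
        revert hval
        cases (SS M x' j') <;> simp
      have ha : ¬ z M x' ≤ (j':ℕ) := fun hle => by
        rw [(SS_iff hM x' j').mpr hle] at hvf; exact Bool.noConfusion hvf
      have hb : z M x' ≤ (y:ℕ) := (SS_iff hM x' y).mp hcol
      have hc : z M x ≤ (j':ℕ) := (SS_iff hM x j').mp hrow
      have hd : z M x < z M x' := by omega
      have hV : z M x' ≤ Vv M (y:ℕ) := Vv_max M (y:ℕ) x' hb
      have : z M x < Vv M (y:ℕ) := by omega
      rw [z_lt_Vv_iff] at this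
      omega
  rw [hset, card_filter_ico (m+1) (i0v M (y:ℕ)) (Ecnt M (y:ℕ)) (Ecnt_le M (y:ℕ))]

lemma CS_perm (M : MEW m n) (i : Fin (m+1)) (j : Fin (n+1)) :
    Cornersupport (SS M) i j ↔ Cornersupport M.T (rp M i) (cp M j) := by
  constructor
  · rintro ⟨i', j', h1, h2, h3, h4, h5⟩
    exact ⟨rp M i', cp M j', fun he => h1 ((rp M).injective he),
      fun he => h2 ((cp M).injective he), h3, h4, h5⟩
  · rintro ⟨i'', j'', h1, h2, h3, h4, h5⟩
    refine ⟨(rp M).symm i'', (cp M).symm j'', ?_, ?_, ?_, ?_, ?_⟩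
    · intro he
      apply h1
      rw [← (rp M).apply_symm_apply i'']
      exact congrArg (rp M) he
    · intro he
      apply h2
      rw [← (cp M).apply_symm_apply j'']
      exact congrArg (cp M) he
    · show M.T (rp M ((rp M).symm i'')) (cp M ((cp M).symm j'')) ≠ _
      rw [(rp M).apply_symm_apply, (cp M).apply_symm_apply]
      exact h3
    · show M.T (rp M ((rp M).symm i'')) (cp M j) = _
      rw [(rp M).apply_symm_apply]
      exact h4
    · show M.T (rp M i) (cp M ((cp M).symm j'')) = _
      rw [(cp M).apply_symm_apply]
      exact h5

lemma etaRow_perm (M : MEW m n) (i : Fin (m+1)) :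
    etaRow M.T (rp M i) = etaRow (SS M) i := by
  unfold etaRow
  rw [← card_filter_comp_equiv (cp M)
    (fun j => M.T (rp M i) j = false ∧ ¬ Cornersupport M.T (rp M i) j)]
  congr 1
  ext j
  simp only [mem_filter, mem_univ, true_and]
  constructor
  · rintro ⟨ha, hb⟩
    exact ⟨ha, fun hcs => hb ((CS_perm M i j).mp hcs)⟩
  · rintro ⟨ha, hb⟩
    exact ⟨ha, fun hcs => hb ((CS_perm M i j).mpr hcs)⟩

lemma etaCol_perm (M : MEW m n) (y : Fin (n+1)) :
    etaCol M.T (cp M y) = etaCol (SS M) y := by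
  unfold etaCol
  rw [← card_filter_comp_equiv (rp M)
    (fun i => M.T i (cp M y) = true ∧ ¬ Cornersupport M.T i (cp M y))]
  congr 1
  ext x
  simp only [mem_filter, mem_univ, true_and]
  constructor
  · rintro ⟨ha, hb⟩
    exact ⟨ha, fun hcs => hb ((CS_perm M x y).mp hcs)⟩
  · rintro ⟨ha, hb⟩
    exact ⟨ha, fun hcs => hb ((CS_perm M x y).mpr hcs)⟩

end EtaFacts

section EllTop
variable {m n : ℕ}

noncomputable def ell (M : MEW m n) (x : Fin (m+1)) : ℕ :=
  leftmost (RR M) x - (etaRow M.T (rp M x) - M.arow (rp M x) - 1)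

noncomputable def topf (M : MEW m n) (y : Fin (n+1)) : ℕ :=
  topmost (RR M) y - (etaCol M.T (cp M y) - M.acol (cp M y) - 1)

noncomputable def sg (M : MEW m n) : Equiv.Perm (Fin (m+1)) :=
  Tuple.sort fun x => toLex (ell M x, ((rp M x : Fin (m+1)) : ℕ))

noncomputable def tg (M : MEW m n) : Equiv.Perm (Fin (n+1)) :=
  Tuple.sort fun y => toLex (topf M y, ((cp M y : Fin (n+1)) : ℕ))

noncomputable def EE (M : MEW m n) : Tab m n :=
  fun i j => decide (ell M (sg M i) ≤ (j:ℕ) ∧ topf M (tg M j) ≤ (i:ℕ))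

lemma Phi_decomp (M : MEW m n) :
    Phi M = ⟨EE M, (sg M).trans (rp M), (tg M).trans (cp M)⟩ := rfl

lemma rp_ne_zero (M : MEW m n) (hM : IsMEW M) (x : Fin (m+1)) (hx : x ≠ 0) :
    rp M x ≠ 0 := by
  intro he
  exact hx ((rp M).injective (he.trans (rp_zero M hM).symm))

lemma ell_eq (M : MEW m n) (hM : IsMEW M) (x : Fin (m+1)) :
    ell M x = wv M x + M.arow (rp M x) := by
  unfold ell
  rw [leftmost_RR hM, etaRow_perm, etaRow_SS hM]
  by_cases hx : x = 0
  · subst hx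
    have h1 : z M 0 = 0 := z_zero M hM
    have h2 : wv M 0 = 0 := wv_zero M hM 0 h1
    have h3 : M.arow (rp M 0) = 0 := by rw [rp_zero M hM]; exact hM.2.1
    rw [h1, h2, h3]
  · have h1 : z M x ≠ 0 := fun h => hx ((z_eq_zero_iff M hM x).mp h)
    have h2 : wv M x < z M x := wv_lt M hM x h1
    have h3 : M.arow (rp M x) < etaRow M.T (rp M x) := hM.2.2.1 _ (rp_ne_zero M hM x hx)
    rw [etaRow_perm, etaRow_SS hM] at h3
    omega

lemma ell_le_pred (M : MEW m n) (hM : IsMEW M) (x : Fin (m+1)) :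
    ell M x ≤ z M x - 1 := by
  rw [ell_eq M hM x]
  by_cases hx : x = 0
  · subst hx
    have h1 : z M 0 = 0 := z_zero M hM
    have h2 : wv M 0 = 0 := wv_zero M hM 0 h1
    have h3 : M.arow (rp M 0) = 0 := by rw [rp_zero M hM]; exact hM.2.1
    omega
  · have h1 : z M x ≠ 0 := fun h => hx ((z_eq_zero_iff M hM x).mp h)
    have h2 : wv M x < z M x := wv_lt M hM x h1
    have h3 : M.arow (rp M x) < etaRow M.T (rp M x) := hM.2.2.1 _ (rp_ne_zero M hM x hx)
    rw [etaRow_perm, etaRow_SS hM] at h3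
    omega

lemma ell_ge (M : MEW m n) (hM : IsMEW M) (x : Fin (m+1)) : wv M x ≤ ell M x := by
  rw [ell_eq M hM x]; omega

lemma topf_eq (M : MEW m n) (hM : IsMEW M) (y : Fin (n+1)) :
    topf M y = i0v M (y:ℕ) + M.acol (cp M y) := by
  unfold topf
  rw [topmost_RR hM, etaCol_perm, etaCol_SS hM]
  have h3 : M.acol (cp M y) < etaCol M.T (cp M y) := hM.2.2.2 _
  rw [etaCol_perm, etaCol_SS hM] at h3
  omega

lemma topf_le (M : MEW m n) (hM : IsMEW M) (y : Fin (n+1)) :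
    topf M y ≤ Ecnt M (y:ℕ) - 1 := by
  rw [topf_eq M hM y]
  have h3 : M.acol (cp M y) < etaCol M.T (cp M y) := hM.2.2.2 _
  rw [etaCol_perm, etaCol_SS hM] at h3
  omega

lemma topf_ge (M : MEW m n) (hM : IsMEW M) (y : Fin (n+1)) :
    i0v M (y:ℕ) ≤ topf M y := by
  rw [topf_eq M hM y]; omega

lemma ell_sg_mono (M : MEW m n) : Monotone (fun i => ell M (sg M i)) := by
  intro a b hab
  have := Tuple.monotone_sort (fun x => toLex (ell M x, ((rp M x : Fin (m+1)) : ℕ))) hab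
  simp only [Function.comp_apply] at this
  rw [Prod.Lex.le_iff] at this
  rcases this with h | h
  · exact le_of_lt h
  · exact le_of_eq h.1

lemma topf_tg_mono (M : MEW m n) : Monotone (fun j => topf M (tg M j)) := by
  intro a b hab
  have := Tuple.monotone_sort (fun y => toLex (topf M y, ((cp M y : Fin (n+1)) : ℕ))) hab
  simp only [Function.comp_apply] at this
  rw [Prod.Lex.le_iff] at this
  rcases this with h | h
  · exact le_of_lt h
  · exact le_of_eq h.1

lemma sg_zero (M : MEW m n) (hM : IsMEW M) : sg M 0 = 0 := by
  have hf0 : ell M 0 = 0 := by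
    rw [ell_eq M hM 0, wv_zero M hM 0 (z_zero M hM), rp_zero M hM, hM.2.1]
  have hmin := Tuple.monotone_sort (fun x => toLex (ell M x, ((rp M x : Fin (m+1)) : ℕ)))
    (Fin.zero_le ((sg M).symm 0))
  simp only [Function.comp_apply] at hmin
  have he : (Tuple.sort fun x => toLex (ell M x, ((rp M x : Fin (m+1)) : ℕ)))
      ((sg M).symm 0) = 0 := (sg M).apply_symm_apply 0
  rw [he] at hmin
  rw [Prod.Lex.le_iff] at hmin
  rcases hmin with h | h
  · simp only [hf0, ofLex_toLex] at h; omega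
  · have h2 := h.2
    have hle : rp M (sg M 0) ≤ rp M 0 := by rw [Fin.le_def]; exact h2
    rw [rp_zero M hM] at hle
    have h3 : rp M (sg M 0) = 0 := Fin.le_zero_iff.mp hle
    exact (rp M).injective (h3.trans (rp_zero M hM).symm)

noncomputable def Acnt (M : MEW m n) (i : ℕ) : ℕ :=
  (univ.filter fun y : Fin (n+1) => topf M y ≤ i).card

noncomputable def Bcnt (M : MEW m n) (j : ℕ) : ℕ :=
  (univ.filter fun x : Fin (m+1) => ell M x ≤ j).card

lemma Acnt_data (M : MEW m n) (i : ℕ) :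
    Acnt M i = (univ.filter fun j : Fin (n+1) => topf M (tg M j) ≤ i).card :=
  (card_filter_comp_equiv (tg M) (fun y => topf M y ≤ i)).symm

lemma Bcnt_data (M : MEW m n) (j : ℕ) :
    Bcnt M j = (univ.filter fun i : Fin (m+1) => ell M (sg M i) ≤ j).card :=
  (card_filter_comp_equiv (sg M) (fun x => ell M x ≤ j)).symm

lemma Ecnt_le_Bcnt (M : MEW m n) (hM : IsMEW M) (j : ℕ) : Ecnt M j ≤ Bcnt M j := by
  apply Finset.card_le_card
  intro x hx
  simp only [mem_filter, mem_univ, true_and] at hx ⊢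
  have := ell_le_pred M hM x
  omega

lemma Ecnt_zero (M : MEW m n) (hM : IsMEW M) : Ecnt M 0 = 1 := by
  unfold Ecnt
  have : (univ.filter fun x : Fin (m+1) => z M x ≤ 0) = {0} := by
    ext x
    simp only [mem_filter, mem_univ, true_and, Finset.mem_singleton]
    rw [Nat.le_zero, z_eq_zero_iff M hM]
  rw [this, Finset.card_singleton]

lemma topf_tg_lt_Bcnt (M : MEW m n) (hM : IsMEW M) (j : Fin (n+1)) :
    topf M (tg M j) < Bcnt M (j:ℕ) := by
  obtain ⟨y0, hy1, hy2⟩ := exists_le_perm (tg M) j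
  have h1 : topf M (tg M j) ≤ topf M y0 := by
    have := topf_tg_mono M (show j ≤ (tg M).symm y0 from by rw [Fin.le_def]; exact hy2)
    simpa using this
  have h2 : topf M y0 ≤ Ecnt M (y0:ℕ) - 1 := topf_le M hM y0
  have h3 : Ecnt M (y0:ℕ) ≤ Ecnt M (j:ℕ) := Ecnt_mono M hy1
  have h4 : 1 ≤ Ecnt M (y0:ℕ) := Ecnt_pos M hM _
  have h5 := Ecnt_le_Bcnt M hM (j:ℕ)
  omega

lemma ell_sg_lt_Acnt (M : MEW m n) (hM : IsMEW M) (i : Fin (m+1)) :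
    ell M (sg M i) < Acnt M (i:ℕ) := by
  obtain ⟨x0, hx1, hx2⟩ := exists_le_perm (sg M) i
  have h1 : ell M (sg M i) ≤ ell M x0 := by
    have := ell_sg_mono M (show i ≤ (sg M).symm x0 from by rw [Fin.le_def]; exact hx2)
    simpa using this
  have h2 : ell M x0 ≤ z M x0 - 1 := ell_le_pred M hM x0
  -- every y with (y:ℕ) < z M x0 has topf y ≤ i
  have key : ∀ y : Fin (n+1), (y:ℕ) < z M x0 → topf M y ≤ (i:ℕ) := by
    intro y hy
    have hE : Ecnt M (y:ℕ) ≤ (x0:ℕ) := by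
      have hsub : (univ.filter fun x : Fin (m+1) => z M x ≤ (y:ℕ)) ⊆
          (univ.filter fun x : Fin (m+1) => (x:ℕ) < (x0:ℕ)) := by
        intro x hx
        simp only [mem_filter, mem_univ, true_and] at hx ⊢
        by_contra hge
        push_neg at hge
        have : z M x0 ≤ z M x := z_mono M (by rw [Fin.le_def]; exact hge)
        omega
      have := Finset.card_le_card hsub
      rw [card_filter_lt_val (m+1) (x0:ℕ) (le_of_lt x0.isLt)] at this
      exact this
    have := topf_le M hM y
    omega
  rcases Nat.eq_zero_or_pos (z M x0) with hz0 | hzpos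
  · -- then ell x0 = 0
    have hx00 : x0 = 0 := (z_eq_zero_iff M hM x0).mp hz0
    have : ell M x0 = 0 := by
      rw [hx00, ell_eq M hM 0, wv_zero M hM 0 (z_zero M hM), rp_zero M hM, hM.2.1]
    have hA : 1 ≤ Acnt M (i:ℕ) := by
      apply Finset.card_pos.mpr
      refine ⟨0, ?_⟩
      simp only [mem_filter, mem_univ, true_and]
      have := topf_le M hM 0
      have := Ecnt_zero M hM
      have hEc : Ecnt M ((0 : Fin (n+1)):ℕ) = 1 := by
        rw [show (((0:Fin (n+1))):ℕ) = 0 from rfl]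
        exact Ecnt_zero M hM
      omega
    omega
  · have hA : z M x0 ≤ Acnt M (i:ℕ) := by
      have hsub : (univ.filter fun y : Fin (n+1) => (y:ℕ) < z M x0) ⊆
          (univ.filter fun y : Fin (n+1) => topf M y ≤ (i:ℕ)) := by
        intro y hy
        simp only [mem_filter, mem_univ, true_and] at hy ⊢
        exact key y hy
      have := Finset.card_le_card hsub
      rw [card_filter_lt_val (n+1) (z M x0) (z_le M x0)] at this
      exact this
    omega

lemma leftmost_EE (M : MEW m n) (hM : IsMEW M) (i : Fin (m+1)) :
    leftmost (EE M) i = ell M (sg M i) := by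
  set b := ell M (sg M i) with hb
  have hbn : b < n + 1 := by
    have h1 := ell_le_pred M hM (sg M i)
    have h2 := z_le M (sg M i)
    omega
  have htop : topf M (tg M ⟨b, hbn⟩) ≤ (i:ℕ) := by
    have hmono := topf_tg_mono M
    have hlt : (b:ℕ) < (univ.filter fun j : Fin (n+1) => topf M (tg M j) ≤ (i:ℕ)).card := by
      rw [← Acnt_data]
      exact ell_sg_lt_Acnt M hM i
    have := (lt_card_iff_of_monotone hmono (i:ℕ) ⟨b, hbn⟩).mpr
    simp only [Fin.val_mk] at this
    exact this hlt
  have hmem : b ∈ {j : ℕ | ∃ h : j < n + 1, EE M i ⟨j, h⟩ = true} := by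
    refine ⟨hbn, ?_⟩
    unfold EE
    rw [decide_eq_true_eq]
    exact ⟨le_refl b, htop⟩
  apply le_antisymm (Nat.sInf_le hmem)
  have hsm := Nat.sInf_mem (Set.nonempty_of_mem hmem)
  obtain ⟨h', hmem'⟩ := hsm
  unfold EE at hmem'
  rw [decide_eq_true_eq] at hmem'
  exact hmem'.1

lemma topmost_EE (M : MEW m n) (hM : IsMEW M) (j : Fin (n+1)) :
    topmost (EE M) j = topf M (tg M j) := by
  set t := topf M (tg M j) with ht
  have htm : t < m + 1 := by
    have h1 := topf_le M hM (tg M j)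
    have h2 := Ecnt_le M ((tg M j : Fin (n+1)):ℕ)
    have h3 := Ecnt_pos M hM ((tg M j : Fin (n+1)):ℕ)
    omega
  have hell : ell M (sg M ⟨t, htm⟩) ≤ (j:ℕ) := by
    have hmono := ell_sg_mono M
    have hlt : (t:ℕ) < (univ.filter fun i : Fin (m+1) => ell M (sg M i) ≤ (j:ℕ)).card := by
      rw [← Bcnt_data]
      exact topf_tg_lt_Bcnt M hM j
    have := (lt_card_iff_of_monotone hmono (j:ℕ) ⟨t, htm⟩).mpr
    simp only [Fin.val_mk] at this
    exact this hlt
  have hmem : t ∈ {i : ℕ | ∃ h : i < m + 1, EE M ⟨i, h⟩ j = true} := by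
    refine ⟨htm, ?_⟩
    unfold EE
    rw [decide_eq_true_eq]
    exact ⟨hell, le_refl t⟩
  apply le_antisymm (Nat.sInf_le hmem)
  have hsm := Nat.sInf_mem (Set.nonempty_of_mem hmem)
  obtain ⟨h', hmem'⟩ := hsm
  unfold EE at hmem'
  rw [decide_eq_true_eq] at hmem'
  exact hmem'.2

end EllTop

section NxtFacts
variable {m n : ℕ}

noncomputable def nxt (M : MEW m n) (v : ℕ) : ℕ :=
  sInf {u : ℕ | u = n+1 ∨ (v < u ∧ ∃ x, z M x = u)}

lemma nxt_mem (M : MEW m n) (v : ℕ) :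
    nxt M v = n+1 ∨ (v < nxt M v ∧ ∃ x, z M x = nxt M v) := by
  have h := Nat.sInf_mem
    (⟨n+1, Or.inl rfl⟩ : Set.Nonempty {u : ℕ | u = n+1 ∨ (v < u ∧ ∃ x, z M x = u)})
  simpa only [Set.mem_setOf_eq, nxt] using h

lemma nxt_le (M : MEW m n) (v : ℕ) : nxt M v ≤ n+1 :=
  Nat.sInf_le (Or.inl rfl)

lemma nxt_gt (M : MEW m n) (v : ℕ) (hv : v < n+1) : v < nxt M v := by
  rcases nxt_mem M v with h | h
  · omega
  · exact h.1

lemma nxt_min (M : MEW m n) (v u : ℕ) (hvu : v < u) (x : Fin (m+1)) (hx : z M x = u) :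
    nxt M v ≤ u :=
  Nat.sInf_le (Or.inr ⟨hvu, x, hx⟩)

lemma nxt_high (M : MEW m n) (v : ℕ) (hv : n+1 ≤ v) : nxt M v = n+1 := by
  rcases nxt_mem M v with h | h
  · exact h
  · obtain ⟨hgt, x, hx⟩ := h
    have := z_le M x
    omega

lemma Ecnt_all (M : MEW m n) : Ecnt M (n+1) = m+1 := by
  unfold Ecnt
  have : (univ.filter fun x : Fin (m+1) => z M x ≤ n+1) = univ := by
    apply Finset.filter_true_of_mem
    intro x _
    exact z_le M x
  rw [this, Finset.card_univ, Fintype.card_fin]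

lemma Bcnt_all (M : MEW m n) (hM : IsMEW M) : Bcnt M n = m+1 := by
  unfold Bcnt
  have : (univ.filter fun x : Fin (m+1) => ell M x ≤ n) = univ := by
    apply Finset.filter_true_of_mem
    intro x _
    have h1 := ell_le_pred M hM x
    have h2 := z_le M x
    omega
  rw [this, Finset.card_univ, Fintype.card_fin]

lemma Acnt_all (M : MEW m n) (hM : IsMEW M) : Acnt M m = n+1 := by
  unfold Acnt
  have : (univ.filter fun y : Fin (n+1) => topf M y ≤ m) = univ := by
    apply Finset.filter_true_of_mem
    intro y _
    have h1 := topf_le M hM y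
    have h2 := Ecnt_le M ((y : Fin (n+1)):ℕ)
    omega
  rw [this, Finset.card_univ, Fintype.card_fin]

lemma Acnt_at (M : MEW m n) (hM : IsMEW M) (v : ℕ) (hlev : ∃ x, z M x = v) :
    Acnt M (Ecnt M v - 1) = nxt M v := by
  unfold Acnt
  have hset : (univ.filter fun y : Fin (n+1) => topf M y ≤ Ecnt M v - 1)
      = (univ.filter fun y : Fin (n+1) => (y:ℕ) < nxt M v) := by
    ext y
    simp only [mem_filter, mem_univ, true_and]
    constructor
    · intro hy
      by_contra hge
      push_neg at hge
      rcases nxt_mem M v with hcase | hcase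
      · have := y.isLt; omega
      · obtain ⟨hgt, x, hx⟩ := hcase
        have hVge : nxt M v ≤ Vv M (y:ℕ) := hx ▸ Vv_max M (y:ℕ) x (by omega)
        have hi0 : Ecnt M v ≤ i0v M (y:ℕ) := by
          unfold Ecnt i0v Fcnt
          apply Finset.card_le_card
          intro x' hx'
          simp only [mem_filter, mem_univ, true_and] at hx' ⊢
          omega
        have := topf_ge M hM y
        have := Ecnt_pos M hM v
        omega
    · intro hy
      have hVle : Vv M (y:ℕ) ≤ v := by
        by_contra hgt
        push_neg at hgt
        obtain ⟨x', hx'⟩ := Vv_level M (y:ℕ)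
        have h1 : nxt M v ≤ Vv M (y:ℕ) := nxt_min M v _ hgt x' hx'.symm
        have h2 : Vv M (y:ℕ) ≤ (y:ℕ) := Vv_le M hM (y:ℕ)
        omega
      have hEle : Ecnt M (y:ℕ) ≤ Ecnt M v := by
        rcases le_or_gt (y:ℕ) v with hyv | hyv
        · exact Ecnt_mono M hyv
        · apply Finset.card_le_card
          intro x' hx'
          simp only [mem_filter, mem_univ, true_and] at hx' ⊢
          have := Vv_max M (y:ℕ) x' hx'
          omega
      have h1 := topf_le M hM y
      have h2 := Ecnt_pos M hM (y:ℕ)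
      omega
  rw [hset, card_filter_lt_val (n+1) (nxt M v) (nxt_le M v)]

lemma Bcnt_at (M : MEW m n) (hM : IsMEW M) (v : ℕ) (hv : 1 ≤ v) (hlev : ∃ x, z M x = v) :
    Bcnt M (v - 1) = Ecnt M v := by
  unfold Bcnt Ecnt
  congr 1
  ext x
  simp only [mem_filter, mem_univ, true_and]
  constructor
  · intro hx
    by_contra hgt
    push_neg at hgt
    obtain ⟨x0, hx0⟩ := hlev
    have hw : v ≤ wv M x := hx0 ▸ wv_ge M hM x x0 (by omega)
    have := ell_ge M hM x
    omega
  · intro hx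
    have := ell_le_pred M hM x
    omega

end NxtFacts

section Seqs
variable {m n : ℕ}

def eseq (A B : ℕ → ℕ) : ℕ → ℕ
  | 0 => 0
  | k+1 => B (A (eseq A B k) - 1) - 1

def vseq (A B : ℕ → ℕ) : ℕ → ℕ
  | 0 => 0
  | k+1 => A (eseq A B k)

lemma seq_inv (M : MEW m n) (hM : IsMEW M) : ∀ k,
    ((∃ x, z M x = vseq (Acnt M) (Bcnt M) k) ∨ vseq (Acnt M) (Bcnt M) k = n+1) ∧
    eseq (Acnt M) (Bcnt M) k = Ecnt M (vseq (Acnt M) (Bcnt M) k) - 1 := by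
  intro k
  induction k with
  | zero =>
    refine ⟨Or.inl ⟨0, z_zero M hM⟩, ?_⟩
    show (0:ℕ) = Ecnt M 0 - 1
    rw [Ecnt_zero M hM]
  | succ k ih =>
    obtain ⟨hlev, he⟩ := ih
    have hv1 : vseq (Acnt M) (Bcnt M) (k+1) = Acnt M (eseq (Acnt M) (Bcnt M) k) := rfl
    have he1 : eseq (Acnt M) (Bcnt M) (k+1)
        = Bcnt M (Acnt M (eseq (Acnt M) (Bcnt M) k) - 1) - 1 := rfl
    rcases hlev with ⟨x, hx⟩ | htop
    · have hA : Acnt M (eseq (Acnt M) (Bcnt M) k) = nxt M (vseq (Acnt M) (Bcnt M) k) := by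
        rw [he]; exact Acnt_at M hM _ ⟨x, hx⟩
      rcases nxt_mem M (vseq (Acnt M) (Bcnt M) k) with hn | hn
      · constructor
        · right; rw [hv1, hA, hn]
        · rw [he1, hA, hn]
          simp only [Nat.add_sub_cancel]
          rw [Bcnt_all M hM, hv1, hA, hn, Ecnt_all M]
      · obtain ⟨hgt, x', hx'⟩ := hn
        constructor
        · left; rw [hv1, hA]; exact ⟨x', hx'⟩
        · rw [he1, hA, Bcnt_at M hM _ (by omega) ⟨x', hx'⟩, hv1, hA]
    · have heqm : eseq (Acnt M) (Bcnt M) k = m := by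
        rw [he, htop, Ecnt_all M]
        omega
      constructor
      · right; rw [hv1, heqm, Acnt_all M hM]
      · rw [he1, hv1, heqm, Acnt_all M hM]
        simp only [Nat.add_sub_cancel]
        rw [Bcnt_all M hM, Ecnt_all M]

lemma vseq_le (M : MEW m n) (hM : IsMEW M) (k : ℕ) :
    vseq (Acnt M) (Bcnt M) k ≤ n+1 := by
  rcases (seq_inv M hM k).1 with ⟨x, hx⟩ | h
  · rw [← hx]; exact z_le M x
  · omega

lemma vseq_min (M : MEW m n) (hM : IsMEW M) : ∀ k,
    min k (n+1) ≤ vseq (Acnt M) (Bcnt M) k := by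
  intro k
  induction k with
  | zero => simp [vseq]
  | succ k ih =>
    obtain ⟨hlev, he⟩ := seq_inv M hM k
    have hv1 : vseq (Acnt M) (Bcnt M) (k+1) = Acnt M (eseq (Acnt M) (Bcnt M) k) := rfl
    rcases hlev with ⟨x, hx⟩ | htop
    · have hA : Acnt M (eseq (Acnt M) (Bcnt M) k) = nxt M (vseq (Acnt M) (Bcnt M) k) := by
        rw [he]; exact Acnt_at M hM _ ⟨x, hx⟩
      rcases lt_or_ge (vseq (Acnt M) (Bcnt M) k) (n+1) with hlt | hge
      · have := nxt_gt M (vseq (Acnt M) (Bcnt M) k) hlt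
        rw [hv1, hA]
        omega
      · have hveq : vseq (Acnt M) (Bcnt M) k = n+1 := le_antisymm (vseq_le M hM k) hge
        rw [hv1, hA, hveq, nxt_high M _ (le_refl _)]
        omega
    · have heqm : eseq (Acnt M) (Bcnt M) k = m := by
        rw [he, htop, Ecnt_all M]
        omega
      rw [hv1, heqm, Acnt_all M hM]
      omega

lemma eseq_reach (M : MEW m n) (hM : IsMEW M) :
    eseq (Acnt M) (Bcnt M) (n+1) = m := by
  have h1 := vseq_min M hM (n+1)
  have h2 := vseq_le M hM (n+1)
  have hveq : vseq (Acnt M) (Bcnt M) (n+1) = n+1 := by omega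
  have := (seq_inv M hM (n+1)).2
  rw [hveq, Ecnt_all M] at this
  omega

lemma z_recover (M : MEW m n) (hM : IsMEW M) (x : Fin (m+1)) (k : ℕ)
    (hk : (x:ℕ) ≤ eseq (Acnt M) (Bcnt M) k)
    (hmin : ∀ k' < k, ¬ ((x:ℕ) ≤ eseq (Acnt M) (Bcnt M) k')) :
    z M x = vseq (Acnt M) (Bcnt M) k := by
  cases k with
  | zero =>
    have hx0 : (x:ℕ) = 0 := by
      have : eseq (Acnt M) (Bcnt M) 0 = 0 := rfl
      omega
    have : x = 0 := Fin.ext hx0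
    rw [this]
    show z M 0 = 0
    exact z_zero M hM
  | succ k =>
    have hmk := hmin k (Nat.lt_succ_self k)
    obtain ⟨hlev, he⟩ := seq_inv M hM k
    obtain ⟨hlev1, he1⟩ := seq_inv M hM (k+1)
    rcases hlev with ⟨x0, hx0⟩ | htop
    · have hA : vseq (Acnt M) (Bcnt M) (k+1) = nxt M (vseq (Acnt M) (Bcnt M) k) := by
        show Acnt M (eseq (Acnt M) (Bcnt M) k) = _
        rw [he]; exact Acnt_at M hM _ ⟨x0, hx0⟩
      have hpos1 : 1 ≤ Ecnt M (vseq (Acnt M) (Bcnt M) (k+1)) := Ecnt_pos M hM _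
      have h1 : z M x ≤ vseq (Acnt M) (Bcnt M) (k+1) := by
        rw [z_le_iff_Ecnt]
        omega
      have h2 : ¬ (z M x ≤ vseq (Acnt M) (Bcnt M) k) := by
        intro hle
        rw [z_le_iff_Ecnt] at hle
        apply hmk
        omega
      have h3 : nxt M (vseq (Acnt M) (Bcnt M) k) ≤ z M x :=
        nxt_min M _ _ (by omega) x rfl
      omega
    · exfalso
      apply hmk
      rw [he, htop, Ecnt_all M]
      have := x.isLt
      omega

lemma Vv_ell_eq_wv (M : MEW m n) (hM : IsMEW M) (x : Fin (m+1)) (hx : x ≠ 0) :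
    Vv M (ell M x) = wv M x := by
  have hz0 : z M x ≠ 0 := fun h => hx ((z_eq_zero_iff M hM x).mp h)
  apply le_antisymm
  · obtain ⟨x'', hx''⟩ := Vv_level M (ell M x)
    have hle : Vv M (ell M x) ≤ ell M x := Vv_le M hM (ell M x)
    have h1 : ell M x ≤ z M x - 1 := ell_le_pred M hM x
    have h2 : z M x'' < z M x := by omega
    have := wv_ge M hM x x'' h2
    omega
  · obtain ⟨x', hx'⟩ := wv_level M x
    have h1 : z M x' ≤ ell M x := by
      have := ell_ge M hM x
      omega
    have := Vv_max M (ell M x) x' h1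
    omega

lemma nxt_wv (M : MEW m n) (hM : IsMEW M) (x : Fin (m+1)) (hx : x ≠ 0) :
    nxt M (wv M x) = z M x := by
  have hz0 : z M x ≠ 0 := fun h => hx ((z_eq_zero_iff M hM x).mp h)
  have hwlt : wv M x < z M x := wv_lt M hM x hz0
  apply le_antisymm
  · exact nxt_min M _ _ hwlt x rfl
  · rcases nxt_mem M (wv M x) with h | h
    · have := z_le M x; omega
    · obtain ⟨hgt, x', hx'⟩ := h
      by_contra hlt
      push_neg at hlt
      have : z M x' < z M x := by omega
      have := wv_ge M hM x x' this
      omega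

lemma z_sg_det (M : MEW m n) (hM : IsMEW M) (i : Fin (m+1)) (hi : i ≠ 0) :
    z M (sg M i) = nxt M (Vv M (ell M (sg M i))) := by
  have hsgne : sg M i ≠ 0 := by
    intro he
    exact hi ((sg M).injective (he.trans (sg_zero M hM).symm))
  rw [Vv_ell_eq_wv M hM _ hsgne, nxt_wv M hM _ hsgne]

lemma z_topf (M : MEW m n) (hM : IsMEW M) (y : Fin (n+1)) (h : topf M y < m+1) :
    z M ⟨topf M y, h⟩ = Vv M (y:ℕ) := by
  apply le_antisymm
  · have h1 := topf_le M hM y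
    have h2 := Ecnt_pos M hM ((y : Fin (n+1)):ℕ)
    have h3 : z M ⟨topf M y, h⟩ ≤ (y:ℕ) := by
      rw [z_le_iff_Ecnt]
      simp only [Fin.val_mk]
      omega
    exact Vv_max M (y:ℕ) _ h3
  · have h1 := topf_ge M hM y
    by_contra hlt
    push_neg at hlt
    have : z M ⟨topf M y, h⟩ < Vv M (y:ℕ) := hlt
    rw [z_lt_Vv_iff] at this
    simp only [Fin.val_mk] at this
    omega

lemma Ecnt_Vv (M : MEW m n) (hM : IsMEW M) (c : ℕ) :
    Ecnt M c = Ecnt M (Vv M c) := by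
  unfold Ecnt
  congr 1
  ext x
  simp only [mem_filter, mem_univ, true_and]
  constructor
  · intro hx; exact Vv_max M c x hx
  · intro hx; exact le_trans hx (Vv_le M hM c)

end Seqs

section Main
variable {m n : ℕ}

lemma main (M₁ M₂ : MEW m n) (h₁ : IsMEW M₁) (h₂ : IsMEW M₂)
    (h : Phi M₁ = Phi M₂) :
    M₁.T = M₂.T ∧ M₁.arow = M₂.arow ∧ M₁.acol = M₂.acol := by
  rw [Phi_decomp M₁, Phi_decomp M₂] at h
  have hE : EE M₁ = EE M₂ := congrArg Labelled.T h
  have hRL : (sg M₁).trans (rp M₁) = (sg M₂).trans (rp M₂) := congrArg Labelled.rl h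
  have hCL : (tg M₁).trans (cp M₁) = (tg M₂).trans (cp M₂) := congrArg Labelled.cl h
  have hpi : ∀ i, rp M₁ (sg M₁ i) = rp M₂ (sg M₂ i) := by
    intro i
    have := Equiv.ext_iff.mp hRL i
    simpa [Equiv.trans_apply] using this
  have hla : ∀ j, cp M₁ (tg M₁ j) = cp M₂ (tg M₂ j) := by
    intro j
    have := Equiv.ext_iff.mp hCL j
    simpa [Equiv.trans_apply] using this
  have hell : ∀ i, ell M₁ (sg M₁ i) = ell M₂ (sg M₂ i) := by
    intro i
    rw [← leftmost_EE M₁ h₁ i, ← leftmost_EE M₂ h₂ i, hE]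
  have htop : ∀ j, topf M₁ (tg M₁ j) = topf M₂ (tg M₂ j) := by
    intro j
    rw [← topmost_EE M₁ h₁ j, ← topmost_EE M₂ h₂ j, hE]
  have hA : Acnt M₁ = Acnt M₂ := by
    funext i
    rw [Acnt_data, Acnt_data]
    congr 1
    ext j
    simp only [mem_filter, mem_univ, true_and, htop j]
  have hB : Bcnt M₁ = Bcnt M₂ := by
    funext j
    rw [Bcnt_data, Bcnt_data]
    congr 1
    ext i
    simp only [mem_filter, mem_univ, true_and, hell i]
  have hz : z M₁ = z M₂ := by
    funext x
    have hex : ∃ k, (x:ℕ) ≤ eseq (Acnt M₁) (Bcnt M₁) k := by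
      refine ⟨n+1, ?_⟩
      rw [eseq_reach M₁ h₁]
      exact Nat.lt_succ_iff.mp x.isLt
    have e1 : z M₁ x = vseq (Acnt M₁) (Bcnt M₁) (Nat.find hex) :=
      z_recover M₁ h₁ x _ (Nat.find_spec hex) (fun k' hk' => Nat.find_min hex hk')
    have e2 : z M₂ x = vseq (Acnt M₂) (Bcnt M₂) (Nat.find hex) := by
      apply z_recover M₂ h₂ x
      · rw [← hA, ← hB]; exact Nat.find_spec hex
      · intro k' hk'
        rw [← hA, ← hB]
        exact Nat.find_min hex hk'
    rw [e1, e2]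
    exact congrFun (congrArg₂ vseq hA hB) (Nat.find hex)
  have hEcnt : Ecnt M₁ = Ecnt M₂ := by
    funext c; unfold Ecnt; rw [hz]
  have hFcnt : Fcnt M₁ = Fcnt M₂ := by
    funext v; unfold Fcnt; rw [hz]
  have hZn : Zn M₁ = Zn M₂ := by
    funext k; unfold Zn; rw [hz]
  have hVv : Vv M₁ = Vv M₂ := by
    funext c; unfold Vv; rw [hZn, hEcnt]
  have hnxt : nxt M₁ = nxt M₂ := by
    funext v; unfold nxt; rw [hz]
  have hzsg : ∀ i : Fin (m+1), z M₁ (sg M₁ i) = z M₂ (sg M₂ i) := by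
    intro i
    by_cases hi : i = 0
    · subst hi
      rw [sg_zero M₁ h₁, sg_zero M₂ h₂, hz]
    · rw [z_sg_det M₁ h₁ i hi, z_sg_det M₂ h₂ i hi, hell i, hVv, hnxt]
  have harow : M₁.arow = M₂.arow := by
    funext r
    have hr1 : rp M₁ (sg M₁ (((sg M₁).trans (rp M₁)).symm r)) = r :=
      Equiv.apply_symm_apply ((sg M₁).trans (rp M₁)) r
    set i := ((sg M₁).trans (rp M₁)).symm r with hidef
    have hr2 : rp M₂ (sg M₂ i) = r := by rw [← hpi i]; exact hr1
    by_cases hi0 : i = 0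
    · have hre : r = 0 := by
        rw [← hr1, hi0, sg_zero M₁ h₁, rp_zero M₁ h₁]
      rw [hre, h₁.2.1, h₂.2.1]
    · have hsg1 : sg M₁ i ≠ 0 := fun he =>
        hi0 ((sg M₁).injective (he.trans (sg_zero M₁ h₁).symm))
      have hsg2 : sg M₂ i ≠ 0 := fun he =>
        hi0 ((sg M₂).injective (he.trans (sg_zero M₂ h₂).symm))
      have ha1 : M₁.arow r = ell M₁ (sg M₁ i) - wv M₁ (sg M₁ i) := by
        rw [← hr1]
        have := ell_eq M₁ h₁ (sg M₁ i)
        omega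
      have ha2 : M₂.arow r = ell M₂ (sg M₂ i) - wv M₂ (sg M₂ i) := by
        rw [← hr2]
        have := ell_eq M₂ h₂ (sg M₂ i)
        omega
      rw [ha1, ha2, ← Vv_ell_eq_wv M₁ h₁ _ hsg1, ← Vv_ell_eq_wv M₂ h₂ _ hsg2,
        hell i, hVv]
  have hacol : M₁.acol = M₂.acol := by
    funext c
    have hc1 : cp M₁ (tg M₁ (((tg M₁).trans (cp M₁)).symm c)) = c :=
      Equiv.apply_symm_apply ((tg M₁).trans (cp M₁)) c
    set j := ((tg M₁).trans (cp M₁)).symm c with hjdef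
    have hc2 : cp M₂ (tg M₂ j) = c := by rw [← hla j]; exact hc1
    have htm1 : topf M₁ (tg M₁ j) < m+1 := by
      have := topf_le M₁ h₁ (tg M₁ j)
      have := Ecnt_le M₁ ((tg M₁ j : Fin (n+1)):ℕ)
      have := Ecnt_pos M₁ h₁ ((tg M₁ j : Fin (n+1)):ℕ)
      omega
    have htm2 : topf M₂ (tg M₂ j) < m+1 := by
      have := topf_le M₂ h₂ (tg M₂ j)
      have := Ecnt_le M₂ ((tg M₂ j : Fin (n+1)):ℕ)
      have := Ecnt_pos M₂ h₂ ((tg M₂ j : Fin (n+1)):ℕ)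
      omega
    have hi01 : i0v M₁ ((tg M₁ j : Fin (n+1)):ℕ)
        = Fcnt M₁ (z M₁ ⟨topf M₁ (tg M₁ j), htm1⟩) := by
      unfold i0v; rw [z_topf M₁ h₁ _ htm1]
    have hi02 : i0v M₂ ((tg M₂ j : Fin (n+1)):ℕ)
        = Fcnt M₂ (z M₂ ⟨topf M₂ (tg M₂ j), htm2⟩) := by
      unfold i0v; rw [z_topf M₂ h₂ _ htm2]
    have ha1 : M₁.acol c = topf M₁ (tg M₁ j) - i0v M₁ ((tg M₁ j : Fin (n+1)):ℕ) := by
      rw [← hc1]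
      have := topf_eq M₁ h₁ (tg M₁ j)
      omega
    have ha2 : M₂.acol c = topf M₂ (tg M₂ j) - i0v M₂ ((tg M₂ j : Fin (n+1)):ℕ) := by
      rw [← hc2]
      have := topf_eq M₂ h₂ (tg M₂ j)
      omega
    have ht' : (⟨topf M₁ (tg M₁ j), htm1⟩ : Fin (m+1)) = ⟨topf M₂ (tg M₂ j), htm2⟩ :=
      Fin.ext (htop j)
    rw [ha1, ha2, hi01, hi02, ht', hz, hFcnt, htop j]
  have hrp : rp M₁ = rp M₂ := by
    apply perm_eq_of_strictMonoOn_fibers (z M₁)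
    · exact rp_stab M₁
    · intro x y hxy hq
      apply rp_stab M₂ x y hxy
      rw [← hz]; exact hq
    · intro v
      have himg : ∀ (M : MEW m n),
          (univ.filter fun x : Fin (m+1) => z M x = v).image (rp M)
          = (univ.filter fun i : Fin (m+1) => z M (sg M i) = v).image
            (fun i => rp M (sg M i)) := by
        intro M
        ext r
        simp only [Finset.mem_image, mem_filter, mem_univ, true_and]
        constructor
        · rintro ⟨x, hx, rfl⟩
          exact ⟨(sg M).symm x, by rw [Equiv.apply_symm_apply]; exact hx,
            by rw [Equiv.apply_symm_apply]⟩
        · rintro ⟨i, hi, rfl⟩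
          exact ⟨sg M i, hi, rfl⟩
      have hgoal2 : (univ.filter fun x : Fin (m+1) => z M₁ x = v).image (rp M₂)
          = (univ.filter fun x : Fin (m+1) => z M₂ x = v).image (rp M₂) := by
        rw [hz]
      rw [hgoal2, himg M₁, himg M₂]
      have hfil : (univ.filter fun i : Fin (m+1) => z M₁ (sg M₁ i) = v)
          = (univ.filter fun i : Fin (m+1) => z M₂ (sg M₂ i) = v) := by
        ext i
        simp only [mem_filter, mem_univ, true_and, hzsg i]
      rw [← hfil]
      apply Finset.image_congr
      intro i _
      exact hpi i
  have hcp : cp M₁ = cp M₂ := by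
    apply perm_eq_of_strictMonoOn_fibers (fun y : Fin (n+1) => Ecnt M₁ ((y : Fin (n+1)):ℕ))
    · intro x y hxy hq
      apply cp_stab M₁ x y hxy
      rw [cnt1_cp_eq_Ecnt M₁ h₁, cnt1_cp_eq_Ecnt M₁ h₁, hq]
    · intro x y hxy hq
      apply cp_stab M₂ x y hxy
      rw [cnt1_cp_eq_Ecnt M₂ h₂, cnt1_cp_eq_Ecnt M₂ h₂, ← hEcnt, hq]
    · intro c
      have hkey : ∀ (M : MEW m n) (hM : IsMEW M) (j : Fin (n+1))
          (htm : topf M (tg M j) < m+1),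
          Ecnt M ((tg M j : Fin (n+1)):ℕ) = Ecnt M (z M ⟨topf M (tg M j), htm⟩) := by
        intro M hM j htm
        rw [Ecnt_Vv M hM ((tg M j : Fin (n+1)):ℕ), z_topf M hM _ htm]
      have himg : ∀ (M : MEW m n),
          (univ.filter fun y : Fin (n+1) => Ecnt M ((y : Fin (n+1)):ℕ) = c).image (cp M)
          = (univ.filter fun j : Fin (n+1) => Ecnt M ((tg M j : Fin (n+1)):ℕ) = c).image
            (fun j => cp M (tg M j)) := by
        intro M
        ext r
        simp only [Finset.mem_image, mem_filter, mem_univ, true_and]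
        constructor
        · rintro ⟨y, hy, rfl⟩
          exact ⟨(tg M).symm y, by rw [Equiv.apply_symm_apply]; exact hy,
            by rw [Equiv.apply_symm_apply]⟩
        · rintro ⟨j, hj, rfl⟩
          exact ⟨tg M j, hj, rfl⟩
      have hgoal2 : (univ.filter fun y : Fin (n+1) => Ecnt M₁ ((y : Fin (n+1)):ℕ) = c).image (cp M₂)
          = (univ.filter fun y : Fin (n+1) => Ecnt M₂ ((y : Fin (n+1)):ℕ) = c).image (cp M₂) := by
        rw [hEcnt]
      rw [hgoal2, himg M₁, himg M₂]
      have hfil : (univ.filter fun j : Fin (n+1) => Ecnt M₁ ((tg M₁ j : Fin (n+1)):ℕ) = c)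
          = (univ.filter fun j : Fin (n+1) => Ecnt M₂ ((tg M₂ j : Fin (n+1)):ℕ) = c) := by
        ext j
        have htm1 : topf M₁ (tg M₁ j) < m+1 := by
          have := topf_le M₁ h₁ (tg M₁ j)
          have := Ecnt_le M₁ ((tg M₁ j : Fin (n+1)):ℕ)
          have := Ecnt_pos M₁ h₁ ((tg M₁ j : Fin (n+1)):ℕ)
          omega
        have htm2 : topf M₂ (tg M₂ j) < m+1 := by
          have := topf_le M₂ h₂ (tg M₂ j)
          have := Ecnt_le M₂ ((tg M₂ j : Fin (n+1)):ℕ)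
          have := Ecnt_pos M₂ h₂ ((tg M₂ j : Fin (n+1)):ℕ)
          omega
        have ht' : (⟨topf M₁ (tg M₁ j), htm1⟩ : Fin (m+1)) = ⟨topf M₂ (tg M₂ j), htm2⟩ :=
          Fin.ext (htop j)
        simp only [mem_filter, mem_univ, true_and]
        rw [hkey M₁ h₁ j htm1, hkey M₂ h₂ j htm2, ht', hz, hEcnt]
      rw [← hfil]
      apply Finset.image_congr
      intro j _
      exact hla j
  have hT : M₁.T = M₂.T := by
    funext r c
    have e1 : M₁.T r c = SS M₁ ((rp M₁).symm r) ((cp M₁).symm c) := by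
      show M₁.T r c = M₁.T (rp M₁ ((rp M₁).symm r)) (cp M₁ ((cp M₁).symm c))
      rw [Equiv.apply_symm_apply, Equiv.apply_symm_apply]
    have e2 : M₂.T r c = SS M₂ ((rp M₂).symm r) ((cp M₂).symm c) := by
      show M₂.T r c = M₂.T (rp M₂ ((rp M₂).symm r)) (cp M₂ ((cp M₂).symm c))
      rw [Equiv.apply_symm_apply, Equiv.apply_symm_apply]
    rw [e1, e2, ← hrp, ← hcp]
    have hiff : (SS M₁ ((rp M₁).symm r) ((cp M₁).symm c) = true)
        ↔ (SS M₂ ((rp M₁).symm r) ((cp M₁).symm c) = true) := by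
      rw [SS_iff h₁, SS_iff h₂, hz]
    cases hb1 : SS M₁ ((rp M₁).symm r) ((cp M₁).symm c)
      <;> cases hb2 : SS M₂ ((rp M₁).symm r) ((cp M₁).symm c)
    · rfl
    · exact absurd (hiff.mpr hb2) (by rw [hb1]; exact fun hx => Bool.noConfusion hx)
    · exact absurd (hiff.mp hb1) (by rw [hb2]; exact fun hx => Bool.noConfusion hx)
    · rfl
  exact ⟨hT, harow, hacol⟩

end Main

end PhiInj

/-- The map `Φ : MEW → LPara` is injective: if
`Φ(T₁, a) = Φ(T₂, b)` then `T₁ = T₂` and `a = b`. -/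
theorem Phi_injective {m n : ℕ} (M₁ M₂ : MEW m n) (h₁ : IsMEW M₁) (h₂ : IsMEW M₂)
    (h : Phi M₁ = Phi M₂) :
    M₁.T = M₂.T ∧ M₁.arow = M₂.arow ∧ M₁.acol = M₂.acol := by
  exact PhiInj.main M₁ M₂ h₁ h₂ h


end EWPaper
end

section
/- In a rectangular EW-tableau T with m rows and n columns, every row below the first contains at least one non-cornersupport 0, and every column contains at least one non-cornersupport 1; equivalently, η_i(T) ≥ 1 for all 1 ≤ i ≤ m+n-1, so the definition of marked rectangular EW-tableaux is well-defined. -/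
/- Combinatorial objects from "EW-tableaux and parallelogram polyominoes".
A tableau of type `(m+1, n+1)` (i.e. with `m+1` rows and `n+1` columns) is a
0/1-filling, encoded as a function to `Bool` (`true` = 1).  Rows are indexed
top to bottom, columns left to right, both starting at `0`.  The row labelled
`v i` (for `i < m+1`) and the column labelled `v ((m+1)+j)` (for `j < n+1`)
are recorded through permutations `rl`, `cl` of `Fin (m+1)`, `Fin (n+1)`. -/

namespace EWPaper

variable {m n : ℕ}

/-- In a rectangular EW-tableau every row below the first
contains at least one non-cornersupport 0 and every column contains at least one
non-cornersupport 1; equivalently `η_i(T) ≥ 1` for every row below the first and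
for every column, so marked rectangular EW-tableaux are well-defined. -/
theorem eta_pos {m n : ℕ} (T : Tab m n) (hT : IsEW T) :
    (∀ i : Fin (m + 1), i ≠ 0 → ∃ j, T i j = false ∧ ¬ Cornersupport T i j) ∧
    (∀ j : Fin (n + 1), ∃ i, T i j = true ∧ ¬ Cornersupport T i j) ∧
    (∀ i : Fin (m + 1), i ≠ 0 → 1 ≤ etaRow T i) ∧
    (∀ j : Fin (n + 1), 1 ≤ etaCol T j) := by
  classical
  obtain ⟨htop, hzero, hrect⟩ := hT
  -- The sets of 1s of the rows form a chain under inclusion.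
  have chain : ∀ i i' : Fin (m + 1),
      (∀ j, T i j = true → T i' j = true) ∨ (∀ j, T i' j = true → T i j = true) := by
    intro i i'
    by_cases hii : i = i'
    · subst hii; left; exact fun j h => h
    by_contra hc
    push_neg at hc
    obtain ⟨⟨j, hj1, hj0⟩, ⟨j', hj'1, hj'0⟩⟩ := hc
    have hjj : j ≠ j' := by rintro rfl; exact hj'0 hj1
    rcases hrect i i' j j' hii hjj hj1 hj'1 with h | h
    · exact hj'0 h
    · exact hj0 h
  -- number of 1s in a row
  set c : Fin (m + 1) → ℕ := fun i => (Finset.univ.filter fun j => T i j = true).card with hc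
  have sub : ∀ a b : Fin (m + 1), (∀ j, T a j = true → T b j = true) → c b ≤ c a →
      (∀ j, T b j = true → T a j = true) := by
    intro a b hab hcard j hj
    have hsub : (Finset.univ.filter fun j => T a j = true) ⊆
        (Finset.univ.filter fun j => T b j = true) := by
      intro x hx
      simp only [Finset.mem_filter, Finset.mem_univ, true_and] at hx ⊢
      exact hab x hx
    have heq := Finset.eq_of_subset_of_card_le hsub hcard
    have : j ∈ (Finset.univ.filter fun j => T b j = true) := by
      simp only [Finset.mem_filter, Finset.mem_univ, true_and]; exact hj
    rw [← heq] at this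
    simp only [Finset.mem_filter, Finset.mem_univ, true_and] at this
    exact this
  -- row claim
  have rowClaim : ∀ i : Fin (m + 1), i ≠ 0 → ∃ j, T i j = false ∧ ¬ Cornersupport T i j := by
    intro i hi
    obtain ⟨j0, hj0⟩ := hzero i hi
    set S : Finset (Fin (m + 1)) := Finset.univ.filter
      (fun i' => (∀ j, T i j = true → T i' j = true) ∧ ∃ j, T i' j = true ∧ T i j = false)
      with hS
    have h0S : (0 : Fin (m + 1)) ∈ S := by
      simp only [hS, Finset.mem_filter, Finset.mem_univ, true_and]
      exact ⟨fun j _ => htop j, j0, htop j0, hj0⟩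
    obtain ⟨a, haS, hamin⟩ := S.exists_min_image c ⟨0, h0S⟩
    have haS' := haS
    simp only [hS, Finset.mem_filter, Finset.mem_univ, true_and] at haS'
    obtain ⟨hRia, jw, hjw1, hjw0⟩ := haS'
    -- a is below every element of S
    have key : ∀ i' ∈ S, ∀ j, T a j = true → T i' j = true := by
      intro i' hi'S j hj
      have hi'' := hi'S
      simp only [hS, Finset.mem_filter, Finset.mem_univ, true_and] at hi''
      rcases chain a i' with h | h
      · exact h j hj
      · exact sub i' a h (hamin i' hi'S) j hj
    refine ⟨jw, hjw0, ?_⟩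
    rintro ⟨i', j', hnei, hnej, hval, hc1, hc2⟩
    rw [hjw0] at hval hc1 hc2
    have hval' : T i' j' = true := by
      cases h : T i' j' with
      | false => exact absurd h hval
      | true => rfl
    have hi'S : i' ∈ S := by
      simp only [hS, Finset.mem_filter, Finset.mem_univ, true_and]
      refine ⟨?_, j', hval', hc2⟩
      rcases chain i i' with h | h
      · exact h
      · have := h j' hval'
        rw [hc2] at this
        exact absurd this (by simp)
    have := key i' hi'S jw hjw1
    rw [hc1] at this
    simp at this
  -- column claim
  have colClaim : ∀ j : Fin (n + 1), ∃ i, T i j = true ∧ ¬ Cornersupport T i j := by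
    intro j
    set S : Finset (Fin (m + 1)) := Finset.univ.filter (fun i => T i j = true) with hS
    have h0S : (0 : Fin (m + 1)) ∈ S := by
      simp only [hS, Finset.mem_filter, Finset.mem_univ, true_and]
      exact htop j
    obtain ⟨a, haS, hamin⟩ := S.exists_min_image c ⟨0, h0S⟩
    have ha1 : T a j = true := by
      simpa only [hS, Finset.mem_filter, Finset.mem_univ, true_and] using haS
    refine ⟨a, ha1, ?_⟩
    rintro ⟨i', j', hnei, hnej, hval, hc1, hc2⟩
    rw [ha1] at hval hc1 hc2
    have hval' : T i' j' = false := by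
      cases h : T i' j' with
      | false => rfl
      | true => exact absurd h hval
    have hi'S : i' ∈ S := by
      simp only [hS, Finset.mem_filter, Finset.mem_univ, true_and]; exact hc1
    have hR : ∀ k, T a k = true → T i' k = true := by
      rcases chain a i' with h | h
      · exact h
      · exact sub i' a h (hamin i' hi'S)
    have := hR j' hc2
    rw [hval'] at this
    simp at this
  refine ⟨rowClaim, colClaim, ?_, ?_⟩
  · intro i hi
    obtain ⟨j, hj1, hj2⟩ := rowClaim i hi
    rw [etaRow, Nat.one_le_iff_ne_zero, ← Nat.pos_iff_ne_zero, Finset.card_pos]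
    exact ⟨j, Finset.mem_filter.mpr ⟨Finset.mem_univ _, hj1, hj2⟩⟩
  · intro j
    obtain ⟨i, hi1, hi2⟩ := colClaim j
    rw [etaCol, Nat.one_le_iff_ne_zero, ← Nat.pos_iff_ne_zero, Finset.card_pos]
    exact ⟨i, Finset.mem_filter.mpr ⟨Finset.mem_univ _, hi1, hi2⟩⟩

end EWPaper
end
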